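/- arXiv:1806.05416 — 5 statements merged into one kernel-verified Lean document; each statement's English description precedes it below -/
import Mathlib

section
/- Let k, n ≥ 0 be integers with k ≥ n. Then the number of partitions of n + C(k+1,2) that have exactly k different values for the parts equals the self convolution of the unrestricted partition function at n, i.e. p(k, n + C(k+1,2)) = Σ_{m=0}^{n} p(m) · p(n − m). -/
/-- `p n`: the number of (unrestricted) partitions of `n`. -/
def numPartitions (n : ℕ) : ℕ := Fintype.card (Nat.Partition n)

/-- `p(k,n)`: the number of partitions of `n` with exactly `k` distinct part sizes. -/
def numPartitionsWithKMagnitudes (k n : ℕ) : ℕ :=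
  Fintype.card {π : Nat.Partition n // π.parts.toFinset.card = k}
open Multiset List

namespace PartConv

lemma list_sum_getD (l : List ℕ) : l.sum = ∑ i ∈ Finset.range l.length, l.getD i 0 := by
  conv_lhs => rw [← List.ofFn_get l]
  rw [List.sum_ofFn, ← Fin.sum_univ_eq_sum_range (fun i => l.getD i 0) l.length]
  exact Finset.sum_congr rfl fun i _ => by
    rw [List.getD_eq_getElem l 0 i.isLt]; rfl

lemma list_map_range_sum (k : ℕ) (f : ℕ → ℕ) :
    ((List.range k).map f).sum = ∑ i ∈ Finset.range k, f i := by
  simp [Finset.sum_range, Finset.range, Multiset.range]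

lemma tri_sum (k : ℕ) : ∑ i ∈ Finset.range k, (i + 1) = (k + 1).choose 2 := by
  rw [Nat.choose_two_right]
  have hg := Finset.sum_range_id_mul_two (k + 1)
  rw [Finset.sum_range_succ' (fun i => i) k] at hg
  omega

lemma sorted_getD_mono {l : List ℕ} (h : l.Pairwise (· ≤ ·)) {i j : ℕ} (hij : i ≤ j)
    (hj : j < l.length) : l.getD i 0 ≤ l.getD j 0 := by
  rcases eq_or_lt_of_le hij with rfl | hlt
  · exact le_refl _
  · rw [List.getD_eq_getElem l 0 (lt_trans hlt hj), List.getD_eq_getElem l 0 hj]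
    exact List.pairwise_iff_getElem.1 h i j _ _ hlt

lemma mset_sum_le_sum {s t : Multiset ℕ} (h : s ≤ t) : s.sum ≤ t.sum := by
  obtain ⟨u, rfl⟩ := Multiset.le_iff_exists_add.1 h
  simp

lemma mset_card_le_sum {s : Multiset ℕ} (h : ∀ x ∈ s, 0 < x) : s.card ≤ s.sum := by
  simpa using Multiset.card_nsmul_le_sum h

lemma key {k b : ℕ} {l : List ℕ} (hl : l.Pairwise (· ≤ ·)) (hlen : l.length = k)
    (hb : 1 ≤ b) (hbk : b + l.sum ≤ k) : ∃ i, i < k ∧ i + 1 + l.getD i 0 = b := by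
  have hsum := list_sum_getD l
  rw [hlen] at hsum
  have hk : 1 ≤ k := le_trans hb (le_trans (Nat.le_add_right _ _) hbk)
  have hf0 : l.getD 0 0 = 0 := by
    by_contra h0
    have h1 : ∀ i ∈ Finset.range k, 1 ≤ l.getD i 0 := fun i hi => by
      have := sorted_getD_mono hl (Nat.zero_le i) (by rw [hlen]; exact Finset.mem_range.1 hi)
      omega
    have : k ≤ l.sum := by
      rw [hsum]
      calc k = ∑ _i ∈ Finset.range k, 1 := by simp
        _ ≤ _ := Finset.sum_le_sum h1
    omega
  by_contra hcon
  push_neg at hcon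
  set T := (Finset.range k).filter (fun i => i + 1 + l.getD i 0 ≤ b) with hT
  have h0T : 0 ∈ T := by
    simp only [hT, Finset.mem_filter, Finset.mem_range]
    exact ⟨hk, by omega⟩
  have hTne : T.Nonempty := ⟨0, h0T⟩
  set j := T.max' hTne with hj
  have hjT : j ∈ T := T.max'_mem hTne
  simp only [hT, Finset.mem_filter, Finset.mem_range] at hjT
  obtain ⟨hjk, hjb⟩ := hjT
  have hjb' : j + 1 + l.getD j 0 < b := lt_of_le_of_ne hjb (hcon j hjk)
  have hj1k : j + 1 < k := by omega
  have hj1T : j + 1 ∉ T := fun h => by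
    have := Finset.le_max' T (j + 1) h
    omega
  have hgj1 : b < j + 2 + l.getD (j+1) 0 := by
    by_contra h
    exact hj1T (by simp only [hT, Finset.mem_filter, Finset.mem_range]; omega)
  set t := b - (j + 1) with ht
  have ht1 : 1 ≤ t := by omega
  have hfj1 : t ≤ l.getD (j+1) 0 := by omega
  have hlow : (k - (j+1)) * t ≤ l.sum := by
    rw [hsum]
    calc (k - (j+1)) * t = ∑ _i ∈ Finset.Ico (j+1) k, t := by
          rw [Finset.sum_const, Nat.card_Ico, smul_eq_mul]
      _ ≤ ∑ i ∈ Finset.Ico (j+1) k, l.getD i 0 := by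
          refine Finset.sum_le_sum fun i hi => ?_
          obtain ⟨h1, h2⟩ := Finset.mem_Ico.1 hi
          exact le_trans hfj1 (sorted_getD_mono hl h1 (by omega))
      _ ≤ ∑ i ∈ Finset.range k, l.getD i 0 := by
          refine Finset.sum_le_sum_of_subset fun i hi => ?_
          rw [Finset.mem_range]
          exact (Finset.mem_Ico.1 hi).2
  set e := (k - (j+1)) * t with he
  have he1 : k - (j+1) ≤ e := by
    calc k - (j+1) = (k - (j+1)) * 1 := by ring
      _ ≤ e := Nat.mul_le_mul_left _ ht1
  omega

/-- parts of a partition, sorted increasingly and padded with zeros to length k -/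
def pad (k : ℕ) (a : Multiset ℕ) : List ℕ :=
  List.replicate (k - a.card) 0 ++ a.sort (· ≤ ·)

lemma pad_length {k : ℕ} {a : Multiset ℕ} (h : a.card ≤ k) : (pad k a).length = k := by
  simp [pad, Multiset.length_sort]; omega

lemma pad_sorted (k : ℕ) (a : Multiset ℕ) : (pad k a).Pairwise (· ≤ ·) := by
  rw [pad, List.pairwise_append]
  refine ⟨List.pairwise_replicate.2 (by simp), Multiset.pairwise_sort _ _, ?_⟩
  intro x hx y hy
  rw [List.eq_of_mem_replicate hx]
  exact Nat.zero_le _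

lemma pad_sum (k : ℕ) (a : Multiset ℕ) : (pad k a).sum = a.sum := by
  rw [pad, List.sum_append, List.sum_replicate, smul_zero, zero_add, ← Multiset.sum_coe,
    Multiset.sort_eq]

lemma pad_filter {k : ℕ} {a : Multiset ℕ} (h : ∀ x ∈ a, 0 < x) :
    (pad k a).filter (· ≠ 0) = a.sort (· ≤ ·) := by
  rw [pad, List.filter_append]
  have h1 : (List.replicate (k - a.card) 0).filter (· ≠ 0) = [] := by
    apply List.filter_eq_nil_iff.2
    intro x hx
    simp [List.eq_of_mem_replicate hx]
  have h2 : (a.sort (· ≤ ·)).filter (· ≠ 0) = a.sort (· ≤ ·) := by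
    apply List.filter_eq_self.2
    intro x hx
    have : x ∈ a := by
      rw [← Multiset.mem_coe, Multiset.sort_eq] at hx
      exact hx
    simpa using (h x this).ne'
  rw [h1, h2, List.nil_append]

def sval (k : ℕ) (a : Multiset ℕ) (i : ℕ) : ℕ := i + 1 + (pad k a).getD i 0

def SL (k : ℕ) (a : Multiset ℕ) : List ℕ := (List.range k).map (sval k a)

lemma sval_strict_mono {k : ℕ} {a : Multiset ℕ} (h : a.card ≤ k) {i j : ℕ} (hij : i < j)
    (hj : j < k) : sval k a i < sval k a j := by
  have := sorted_getD_mono (pad_sorted k a) (le_of_lt hij) (by rw [pad_length h]; exact hj)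
  unfold sval; omega

lemma SL_sorted_lt {k : ℕ} {a : Multiset ℕ} (h : a.card ≤ k) : (SL k a).Pairwise (· < ·) := by
  rw [SL, List.pairwise_map]
  exact List.Pairwise.imp_of_mem (fun hx hy hlt => sval_strict_mono h hlt (List.mem_range.1 hy))
    (List.pairwise_lt_range (n := k))

lemma SL_length (k : ℕ) (a : Multiset ℕ) : (SL k a).length = k := by simp [SL]

lemma SL_sum {k : ℕ} {a : Multiset ℕ} (h : a.card ≤ k) :
    (SL k a).sum = (k + 1).choose 2 + a.sum := by
  rw [SL, list_map_range_sum]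
  unfold sval
  rw [Finset.sum_add_distrib, tri_sum]
  have h4 : ∑ i ∈ Finset.range k, (pad k a).getD i 0 = a.sum := by
    rw [← pad_sum k a, list_sum_getD, pad_length h]
  rw [h4]

lemma SL_getD {k : ℕ} {a : Multiset ℕ} {i : ℕ} (hi : i < k) :
    (SL k a).getD i 0 = sval k a i := by
  rw [SL, List.getD_eq_getElem _ 0 (by simpa using hi)]
  simp


open Multiset List

lemma sort_coe_of_sorted {l : List ℕ} (h : l.Pairwise (· ≤ ·)) :
    Multiset.sort (↑l : Multiset ℕ) (· ≤ ·) = l :=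
  List.Perm.eq_of_pairwise' (Multiset.pairwise_sort _ _) h
    (Multiset.coe_eq_coe.1 (Multiset.sort_eq _ _))

/-- a sorted list of naturals is its zero part followed by its nonzero part -/
lemma sorted_zero_pad {l : List ℕ} (h : l.Pairwise (· ≤ ·)) :
    List.replicate (l.length - (l.filter (· ≠ 0)).length) 0 ++ l.filter (· ≠ 0) = l := by
  induction l with
  | nil => simp
  | cons x xs ih =>
    have hxs : xs.Pairwise (· ≤ ·) := h.of_cons
    have hhead : ∀ y ∈ xs, x ≤ y := fun _ hy => List.rel_of_pairwise_cons h hy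
    by_cases hx : x = 0
    · subst hx
      rw [List.filter_cons_of_neg (by simp)]
      have hle : (xs.filter (· ≠ 0)).length ≤ xs.length := List.length_filter_le _ _
      have : (0 :: xs).length - (xs.filter (· ≠ 0)).length
          = (xs.length - (xs.filter (· ≠ 0)).length) + 1 := by
        simp only [List.length_cons]; omega
      rw [this, List.replicate_succ, List.cons_append, ih hxs]
    · have hall : ∀ y ∈ x :: xs, y ≠ 0 := by
        intro y hy
        rcases List.mem_cons.1 hy with rfl | hy'
        · exact hx
        · have := hhead y hy'; omega
      rw [List.filter_eq_self.2 (fun a ha => by simpa using hall a ha)]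
      simp

lemma sorted_lt_getD_add {l : List ℕ} (h : l.Pairwise (· < ·)) {i j : ℕ} (hij : i ≤ j)
    (hj : j < l.length) : l.getD i 0 + (j - i) ≤ l.getD j 0 := by
  induction j with
  | zero =>
    have : i = 0 := by omega
    subst this; simp
  | succ j ih =>
    rcases Nat.lt_or_ge i (j + 1) with hlt | hge
    · have h1 := ih (by omega) (by omega)
      have h2 : l.getD j 0 < l.getD (j+1) 0 := by
        rw [List.getD_eq_getElem l 0 (by omega), List.getD_eq_getElem l 0 hj]
        exact List.pairwise_iff_getElem.1 h j (j+1) _ _ (by omega)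
      omega
    · have : i = j + 1 := by omega
      subst this; simp

/-- reconstruction: from a strictly sorted positive list `dl` of length `k`,
subtracting `i+1` from the `i`-th entry, dropping zeros, and rebuilding gives back `dl`. -/
lemma SL_reconstruct {k : ℕ} {dl : List ℕ} (hlt : dl.Pairwise (· < ·)) (hlen : dl.length = k)
    (hpos : ∀ x ∈ dl, 0 < x) (hge : ∀ i < k, i + 1 ≤ dl.getD i 0) :
    SL k ↑(((List.range k).map (fun i => dl.getD i 0 - (i+1))).filter (· ≠ 0)) = dl := by
  set f : ℕ → ℕ := fun i => dl.getD i 0 - (i+1) with hf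
  set flist := (List.range k).map f with hflist
  have hflen : flist.length = k := by simp [hflist]
  have hfget : ∀ i (hi : i < k), flist.getD i 0 = f i := by
    intro i hi
    rw [hflist, List.getD_eq_getElem _ 0 (by simpa using hi)]
    simp
  have hfsorted : flist.Pairwise (· ≤ ·) := by
    rw [hflist, List.pairwise_map]
    refine List.Pairwise.imp_of_mem ?_ (List.pairwise_lt_range (n := k))
    intro i j hi hj hij
    have hjk : j < k := List.mem_range.1 hj
    have h1 : dl.getD i 0 + (j - i) ≤ dl.getD j 0 :=
      sorted_lt_getD_add hlt (le_of_lt hij) (by omega)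
    show dl.getD i 0 - (i + 1) ≤ dl.getD j 0 - (j + 1)
    omega
  set P := flist.filter (· ≠ 0) with hP
  have hPsorted : P.Pairwise (· ≤ ·) := hfsorted.filter _
  have hPcard : (↑P : Multiset ℕ).card = P.length := by simp
  have hPlen : P.length ≤ k := by rw [← hflen]; exact List.length_filter_le _ _
  have hpadP : pad k ↑P = flist := by
    rw [pad, hPcard, sort_coe_of_sorted hPsorted]
    have := sorted_zero_pad hfsorted
    rw [hflen] at this
    exact this
  -- now compute SL
  apply List.ext_getElem (by simp [SL_length, hlen])
  intro i h1 h2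
  have hik : i < k := by simpa [SL_length] using h1
  have : (SL k ↑P)[i] = (SL k ↑P).getD i 0 := by
    rw [List.getD_eq_getElem _ 0 h1]
  rw [this, SL_getD hik]
  unfold sval
  rw [hpadP, hfget i hik]
  show i + 1 + (dl.getD i 0 - (i + 1)) = dl[i]
  have h3 := hge i hik
  rw [List.getD_eq_getElem dl 0 h2] at h3 ⊢
  omega


open Multiset List

lemma list_filter_ne_sum (l : List ℕ) : (l.filter (· ≠ 0)).sum = l.sum := by
  induction l with
  | nil => rfl
  | cons x xs ih =>
    by_cases hx : x = 0 <;>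
      simp_all [List.filter_cons]

lemma parts_card_le {m k : ℕ} (α : Nat.Partition m) (hmk : m ≤ k) : α.parts.card ≤ k :=
  le_trans (le_trans (mset_card_le_sum fun _ hx => α.parts_pos hx) (le_of_eq α.parts_sum)) hmk

lemma mem_SL_of_mem_beta {k n m : ℕ} (hkn : n ≤ k) (hm : m ≤ n) (α : Nat.Partition m)
    (β : Nat.Partition (n - m)) {b : ℕ} (hb : b ∈ β.parts) : b ∈ SL k α.parts := by
  have h1 : 1 ≤ b := β.parts_pos hb
  have h2 : b ≤ n - m := by
    rw [← β.parts_sum]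
    exact Multiset.single_le_sum (fun _ _ => Nat.zero_le _) _ hb
  have hcard := parts_card_le α (le_trans hm hkn)
  have hsum : (pad k α.parts).sum = m := by rw [pad_sum, α.parts_sum]
  obtain ⟨i, hik, hi⟩ := key (pad_sorted k α.parts) (pad_length hcard) h1
    (by rw [hsum]; omega)
  exact List.mem_map.2 ⟨i, List.mem_range.2 hik, hi⟩

variable (k n : ℕ)

/-- The forward map: from a pair of partitions to a partition with k distinct part sizes. -/
def fwd (hkn : n ≤ k) (x : Σ m : Fin (n+1), Nat.Partition m × Nat.Partition (n - m)) :
    {π : Nat.Partition (n + (k+1).choose 2) // π.parts.toFinset.card = k} :=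
  have hmn : (x.1 : ℕ) ≤ n := Nat.lt_succ_iff.1 x.1.isLt
  have hacard : x.2.1.parts.card ≤ k := parts_card_le x.2.1 (le_trans hmn hkn)
  ⟨⟨(↑(SL k x.2.1.parts) : Multiset ℕ) + x.2.2.parts,
    by
      intro i hi
      rcases Multiset.mem_add.1 hi with h | h
      · rw [Multiset.mem_coe] at h
        obtain ⟨j, _, rfl⟩ := List.mem_map.1 h
        unfold sval
        omega
      · exact x.2.2.parts_pos h,
    by
      rw [Multiset.sum_add, Multiset.sum_coe, SL_sum hacard, x.2.1.parts_sum, x.2.2.parts_sum]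
      omega⟩,
    by
      show ((↑(SL k x.2.1.parts) : Multiset ℕ) + x.2.2.parts).toFinset.card = k
      rw [Multiset.toFinset_add]
      have hsub : x.2.2.parts.toFinset ⊆ (↑(SL k x.2.1.parts) : Multiset ℕ).toFinset := by
        intro y hy
        rw [Multiset.mem_toFinset] at hy ⊢
        rw [Multiset.mem_coe]
        exact mem_SL_of_mem_beta hkn hmn x.2.1 x.2.2 hy
      rw [Finset.union_comm, Finset.union_eq_right.2 hsub,
        Multiset.toFinset_card_of_nodup (Multiset.coe_nodup.2 (SL_sorted_lt hacard).nodup)]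
      simp [SL_length]⟩

section Inv

variable {k n : ℕ} (hkn : n ≤ k)
variable (π : {π : Nat.Partition (n + (k+1).choose 2) // π.parts.toFinset.card = k})

/-- the sorted list of distinct part sizes -/
def dl : List ℕ := π.1.parts.toFinset.sort (· ≤ ·)

lemma dl_coe : (↑(dl π) : Multiset ℕ) = π.1.parts.dedup := by
  rw [dl, Finset.sort_eq, Multiset.toFinset_val]

lemma dl_len : (dl π).length = k := by rw [dl, Finset.length_sort, π.2]

lemma dl_lt : (dl π).Pairwise (· < ·) := (Finset.sortedLT_sort _).pairwise

lemma dl_pos : ∀ x ∈ dl π, 0 < x := by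
  intro x hx
  have : x ∈ π.1.parts := by
    rw [← Multiset.mem_coe, dl_coe, Multiset.mem_dedup] at hx
    exact hx
  exact π.1.parts_pos this

lemma dl_ge : ∀ i < k, i + 1 ≤ (dl π).getD i 0 := by
  intro i hik
  have hlen : i < (dl π).length := by rw [dl_len (k := k) π]; exact hik
  have h0 : 1 ≤ (dl π).getD 0 0 := by
    rw [List.getD_eq_getElem _ 0 (by omega)]
    exact dl_pos π _ (List.getElem_mem _)
  have := sorted_lt_getD_add (dl_lt π) (Nat.zero_le i) hlen
  omega

/-- the numerical value `m` recovered from a partition -/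
def mval : ℕ := ∑ i ∈ Finset.range k, ((dl π).getD i 0 - (i + 1))

lemma dl_sum : (dl π).sum = (k + 1).choose 2 + mval (k := k) π := by
  rw [list_sum_getD, dl_len (k := k) π, mval, ← tri_sum k, ← Finset.sum_add_distrib]
  refine Finset.sum_congr rfl fun i hi => ?_
  have := dl_ge π i (Finset.mem_range.1 hi)
  omega

lemma dedup_sum_eq : π.1.parts.dedup.sum = (k + 1).choose 2 + mval (k := k) π := by
  rw [← dl_coe, Multiset.sum_coe, dl_sum (k := k) π]

lemma mval_le : mval (k := k) π ≤ n := by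
  have h1 : π.1.parts.dedup.sum ≤ π.1.parts.sum := mset_sum_le_sum (Multiset.dedup_le _)
  rw [π.1.parts_sum, dedup_sum_eq (k := k) π, Nat.add_comm n ((k+1).choose 2)] at h1
  exact Nat.le_of_add_le_add_left h1

/-- The inverse map. -/
def inv : Σ m : Fin (n+1), Nat.Partition m × Nat.Partition (n - m) :=
  ⟨⟨mval (k := k) π, Nat.lt_succ_of_le (mval_le (k := k) π)⟩,
   ⟨⟨(↑(((List.range k).map (fun i => (dl π).getD i 0 - (i+1))).filter (· ≠ 0)) : Multiset ℕ),
     by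
       intro i hi
       rw [Multiset.mem_coe, List.mem_filter] at hi
       have h0 : i ≠ 0 := by simpa using hi.2
       exact Nat.pos_of_ne_zero h0,
     by
       show Multiset.sum _ = _
       rw [Multiset.sum_coe, list_filter_ne_sum, list_map_range_sum]
       rfl⟩,
    ⟨π.1.parts - π.1.parts.dedup,
     fun {i} hi => π.1.parts_pos (Multiset.mem_of_le (Multiset.sub_le_self _ _) hi),
     by
       have hle : π.1.parts.dedup ≤ π.1.parts := Multiset.dedup_le _
       have hca : π.1.parts.dedup + (π.1.parts - π.1.parts.dedup) = π.1.parts :=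
         add_tsub_cancel_of_le hle
       have hs := congrArg Multiset.sum hca
       rw [Multiset.sum_add, π.1.parts_sum, dedup_sum_eq (k := k) π] at hs
       have hml := mval_le (k := k) (n := n) π
       show (π.1.parts - π.1.parts.dedup).sum = n - mval (k := k) π
       generalize hM : mval (k := k) π = M at *
       omega⟩⟩⟩

end Inv


open Multiset List

lemma SL_sorted_le {k : ℕ} {a : Multiset ℕ} (h : a.card ≤ k) : (SL k a).Pairwise (· ≤ ·) :=
  (SL_sorted_lt h).imp le_of_lt

lemma fwd_inv {k n : ℕ} (hkn : n ≤ k)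
    (π : {π : Nat.Partition (n + (k+1).choose 2) // π.parts.toFinset.card = k}) :
    fwd k n hkn (inv (k := k) π) = π := by
  apply Subtype.ext
  apply Nat.Partition.ext
  show (↑(SL k ↑(((List.range k).map (fun i => (dl π).getD i 0 - (i+1))).filter (· ≠ 0)))
      : Multiset ℕ) + (π.1.parts - π.1.parts.dedup) = π.1.parts
  have h1 : (↑(SL k ↑(((List.range k).map (fun i => (dl π).getD i 0 - (i+1))).filter (· ≠ 0)))
      : Multiset ℕ) = ↑(dl π) :=
    congrArg _ (SL_reconstruct (dl_lt π) (dl_len (k := k) π) (dl_pos π) (dl_ge (k := k) π))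
  rw [h1, dl_coe]
  exact add_tsub_cancel_of_le (Multiset.dedup_le _)

lemma fwd_inj (k n : ℕ) (hkn : n ≤ k) : Function.Injective (fwd k n hkn) := by
  rintro ⟨⟨m₁, hm₁⟩, α₁, β₁⟩ ⟨⟨m₂, hm₂⟩, α₂, β₂⟩ h
  have hparts : (↑(SL k α₁.parts) : Multiset ℕ) + β₁.parts
      = (↑(SL k α₂.parts) : Multiset ℕ) + β₂.parts := congrArg (fun t => t.1.parts) h
  have hmn₁ : m₁ ≤ n := Nat.lt_succ_iff.1 hm₁
  have hmn₂ : m₂ ≤ n := Nat.lt_succ_iff.1 hm₂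
  have hacard₁ : α₁.parts.card ≤ k := parts_card_le α₁ (le_trans hmn₁ hkn)
  have hacard₂ : α₂.parts.card ≤ k := parts_card_le α₂ (le_trans hmn₂ hkn)
  have habs : ∀ (m : ℕ) (hmn : m ≤ n) (α : Nat.Partition m) (β : Nat.Partition (n - m)),
      ((↑(SL k α.parts) : Multiset ℕ) + β.parts).toFinset
        = (↑(SL k α.parts) : Multiset ℕ).toFinset := by
    intro m hmn α β
    rw [Multiset.toFinset_add]
    refine Finset.union_eq_left.2 fun y hy => ?_
    rw [Multiset.mem_toFinset] at hy ⊢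
    rw [Multiset.mem_coe]
    exact mem_SL_of_mem_beta hkn hmn α β hy
  have hsl : SL k α₁.parts = SL k α₂.parts := by
    have h1 : (↑(SL k α₁.parts) : Multiset ℕ).toFinset
        = (↑(SL k α₂.parts) : Multiset ℕ).toFinset := by
      rw [← habs m₁ hmn₁ α₁ β₁, hparts, habs m₂ hmn₂ α₂ β₂]
    have h2 : ((↑(SL k α₁.parts)) : Multiset ℕ).dedup = ((↑(SL k α₂.parts)) : Multiset ℕ).dedup := by
      rw [← Multiset.toFinset_val, ← Multiset.toFinset_val, h1]
    rw [Multiset.dedup_eq_self.2 (Multiset.coe_nodup.2 (SL_sorted_lt hacard₁).nodup),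
      Multiset.dedup_eq_self.2 (Multiset.coe_nodup.2 (SL_sorted_lt hacard₂).nodup)] at h2
    exact List.Perm.eq_of_pairwise' (SL_sorted_le hacard₁) (SL_sorted_le hacard₂)
      (Multiset.coe_eq_coe.1 h2)
  have hpad : pad k α₁.parts = pad k α₂.parts := by
    apply List.ext_getElem (by rw [pad_length hacard₁, pad_length hacard₂])
    intro i h1 h2
    have hik : i < k := by rw [pad_length hacard₁] at h1; exact h1
    have h3 := congrArg (fun l => l.getD i 0) hsl
    simp only [SL_getD hik] at h3
    unfold sval at h3
    rw [← List.getD_eq_getElem _ 0 h1, ← List.getD_eq_getElem _ 0 h2]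
    omega
  have hape : α₁.parts = α₂.parts := by
    have h1 := congrArg (List.filter (· ≠ 0)) hpad
    rw [pad_filter (fun x hx => α₁.parts_pos hx), pad_filter (fun x hx => α₂.parts_pos hx)] at h1
    calc α₁.parts = ↑(α₁.parts.sort (· ≤ ·)) := (Multiset.sort_eq _ _).symm
      _ = ↑(α₂.parts.sort (· ≤ ·)) := congrArg _ h1
      _ = α₂.parts := Multiset.sort_eq _ _
  have hm : m₁ = m₂ := by
    have h₁ : α₁.parts.sum = m₁ := α₁.parts_sum
    have h₂ : α₂.parts.sum = m₂ := α₂.parts_sum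
    rw [hape] at h₁
    exact h₁.symm.trans h₂
  subst hm
  have hbpe : β₁.parts = β₂.parts := by
    rw [hsl] at hparts
    exact add_left_cancel hparts
  have hα : α₁ = α₂ := Nat.Partition.ext hape
  have hβ : β₁ = β₂ := Nat.Partition.ext hbpe
  subst hα
  subst hβ
  rfl

end PartConv

theorem partitions_k_magnitudes_shifted_eq_self_convolution (k n : ℕ) (hkn : n ≤ k) :
    numPartitionsWithKMagnitudes k (n + (k + 1).choose 2) =
      ∑ m ∈ Finset.range (n + 1), numPartitions m * numPartitions (n - m) := by
  have hbij : Function.Bijective (PartConv.fwd k n hkn) :=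
    ⟨PartConv.fwd_inj k n hkn, fun π => ⟨PartConv.inv (k := k) π, PartConv.fwd_inv hkn π⟩⟩
  have e := Equiv.ofBijective _ hbij
  have hcard : Fintype.card (Σ m : Fin (n+1), Nat.Partition m × Nat.Partition (n - m))
      = Fintype.card {π : Nat.Partition (n + (k+1).choose 2) // π.parts.toFinset.card = k} :=
    Fintype.card_congr e
  rw [numPartitionsWithKMagnitudes, ← hcard, Fintype.card_sigma]
  simp only [Fintype.card_prod]
  exact Fin.sum_univ_eq_sum_range
    (fun m => Fintype.card (Nat.Partition m) * Fintype.card (Nat.Partition (n - m))) (n+1)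
end

section
/- Let k, n ≥ 0 be integers. Then p(k,n) = Σ_{m = C(k+1,2)}^{n} a(k,m) · p(n − m), where a(k,m) = Σ_{j ≥ k} (−1)^{j−k} · C(j,k) · q(j,m) (the sum over j is finite since q(j,m) = 0 for j > m). -/
/-- `q(k,n)`: the number of partitions of `n` into exactly `k` distinct parts. -/
def numDistinctPartitionsWithKParts (k n : ℕ) : ℕ :=
  Fintype.card {π : Nat.Partition n // π.parts.card = k ∧ π.parts.Nodup}

/-- `a(k,m) = Σ_{j ≥ k} (−1)^(j−k) C(j,k) q(j,m)`; the sum is finite since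
`q(j,m) = 0` for `j > m`. -/
def mercaA (k m : ℕ) : ℤ :=
  ∑ j ∈ Finset.Icc k m,
    (-1) ^ (j - k) * (j.choose k : ℤ) * (numDistinctPartitionsWithKParts j m : ℤ)

open Finset

namespace MercaAux

lemma gauss (s : ℕ) : ∑ i ∈ range (s + 1), i = (s + 1).choose 2 := by
  rw [Finset.sum_range_id, Nat.choose_two_right]

lemma tri_le (s : ℕ) : s ≤ (s + 1).choose 2 := by
  rw [← gauss]
  exact Finset.single_le_sum (f := fun i => i) (fun i _ => Nat.zero_le i)
    (Finset.self_mem_range_succ s)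

lemma tri_le_sum : ∀ (c : ℕ) (F : Finset ℕ), F.card = c → (∀ x ∈ F, 0 < x) →
    (c + 1).choose 2 ≤ ∑ a ∈ F, a := by
  intro c
  induction c with
  | zero => intro F h _; simp
  | succ c ih =>
    intro F hc hpos
    have hne : F.Nonempty := Finset.card_pos.mp (by omega)
    set M := F.max' hne with hM
    have hMmem : M ∈ F := F.max'_mem hne
    have hsub : F ⊆ Finset.Icc 1 M := fun x hx =>
      Finset.mem_Icc.mpr ⟨hpos x hx, F.le_max' x hx⟩
    have hcard : c + 1 ≤ M := by
      have := Finset.card_le_card hsub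
      rw [hc, Nat.card_Icc] at this
      omega
    have herase : (F.erase M).card = c := by
      rw [Finset.card_erase_of_mem hMmem, hc]
      omega
    have hpos' : ∀ x ∈ F.erase M, 0 < x := fun x hx => hpos x (Finset.mem_of_mem_erase hx)
    have hih := ih (F.erase M) herase hpos'
    have hsum : ∑ a ∈ F, a = M + ∑ a ∈ F.erase M, a :=
      (Finset.add_sum_erase F id hMmem).symm
    have hch : (c + 1 + 1).choose 2 = (c + 1) + (c + 1).choose 2 := by
      rw [Nat.choose_succ_succ (c + 1) 1, Nat.choose_one_right]
    omega

lemma sum_toFinset {s : Multiset ℕ} (h : s.Nodup) : ∑ a ∈ s.toFinset, a = s.sum := by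
  rw [← Multiset.toFinset_eq h]
  show (Multiset.map id s).sum = s.sum
  rw [Multiset.map_id]

lemma q_eq_zero {j m : ℕ} (h : m < (j + 1).choose 2) :
    numDistinctPartitionsWithKParts j m = 0 := by
  rw [numDistinctPartitionsWithKParts, Fintype.card_eq_zero_iff]
  constructor
  rintro ⟨π, hcard, hnodup⟩
  have h1 : π.parts.toFinset.card = j := by
    rw [Multiset.toFinset_card_of_nodup hnodup, hcard]
  have h2 : ∑ a ∈ π.parts.toFinset, a = m := by
    rw [sum_toFinset hnodup, π.parts_sum]
  have := tri_le_sum j π.parts.toFinset h1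
    (fun x hx => π.parts_pos (Multiset.mem_toFinset.mp hx))
  omega

lemma d_le (n : ℕ) (π : Nat.Partition n) : π.parts.toFinset.card ≤ n := by
  have h1 : π.parts.toFinset.card ≤ ∑ a ∈ π.parts.toFinset, a := by
    have := Finset.card_nsmul_le_sum π.parts.toFinset (fun a => a) 1
      (fun x hx => π.parts_pos (Multiset.mem_toFinset.mp hx))
    simpa using this
  have h2 : ∑ a ∈ π.parts.toFinset, a ≤ n := by
    have hle : π.parts.dedup ≤ π.parts := Multiset.dedup_le _
    obtain ⟨u, hu⟩ := Multiset.le_iff_exists_add.mp hle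
    have hsums : π.parts.dedup.sum + u.sum = n := by
      rw [← Multiset.sum_add, ← hu, π.parts_sum]
    have h3 : ∑ a ∈ π.parts.toFinset, a = π.parts.dedup.sum := by
      rw [← sum_toFinset (Multiset.nodup_dedup π.parts), Multiset.toFinset_dedup]
    omega
  omega

/-- Pairs (s, t): s a nodup multiset of j positive parts, t an arbitrary multiset of
positive parts, total sum n. -/
def Pairs (j n : ℕ) : Type :=
  {st : Multiset ℕ × Multiset ℕ //
    st.1.Nodup ∧ Multiset.card st.1 = j ∧ (∀ x ∈ st.1, 0 < x) ∧ (∀ x ∈ st.2, 0 < x) ∧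
      st.1.sum + st.2.sum = n}

abbrev TypeA (j n : ℕ) : Type :=
  Σ π : Nat.Partition n, {S : Finset ℕ // S ∈ π.parts.toFinset.powersetCard j}

abbrev TypeB (j n : ℕ) : Type :=
  Σ m : Fin (n + 1),
    {σ : Nat.Partition (m : ℕ) // σ.parts.card = j ∧ σ.parts.Nodup} ×
      Nat.Partition (n - (m : ℕ))

lemma le_parts {n j : ℕ} (π : Nat.Partition n)
    (S : {S : Finset ℕ // S ∈ π.parts.toFinset.powersetCard j}) :
    (S.val.val : Multiset ℕ) ≤ π.parts :=
  (Multiset.le_iff_subset S.val.nodup).mpr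
    (fun a ha => Multiset.mem_toFinset.mp ((Finset.mem_powersetCard.mp S.prop).1 ha))

def toPairsA (j n : ℕ) : TypeA j n → Pairs j n := fun x =>
  ⟨(x.2.val.val, x.1.parts - x.2.val.val), by
    obtain ⟨hsub, hcard⟩ := Finset.mem_powersetCard.mp x.2.prop
    have hle := le_parts x.1 x.2
    refine ⟨x.2.val.nodup, hcard, ?_, ?_, ?_⟩
    · exact fun y hy => x.1.parts_pos (Multiset.mem_of_le hle hy)
    · exact fun y hy => x.1.parts_pos (Multiset.mem_of_le (Multiset.sub_le_self _ _) hy)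
    · have h := add_tsub_cancel_of_le hle
      calc x.2.val.val.sum + (x.1.parts - x.2.val.val).sum
          = (x.2.val.val + (x.1.parts - x.2.val.val)).sum := (Multiset.sum_add _ _).symm
        _ = n := by rw [h, x.1.parts_sum]⟩

lemma toPairsA_bij (j n : ℕ) : Function.Bijective (toPairsA j n) := by
  constructor
  · rintro ⟨π, S⟩ ⟨π', S'⟩ h
    have h1 : S.val.val = S'.val.val := congrArg (fun z : Pairs j n => z.val.1) h
    have h2 : π.parts - S.val.val = π'.parts - S'.val.val :=
      congrArg (fun z : Pairs j n => z.val.2) h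
    have hparts : π.parts = π'.parts := by
      rw [← add_tsub_cancel_of_le (le_parts π S), ← add_tsub_cancel_of_le (le_parts π' S'),
        h2, h1]
    have hπ : π = π' := Nat.Partition.ext hparts
    subst hπ
    have hSS : S = S' := Subtype.ext (Finset.val_inj.mp h1)
    subst hSS
    rfl
  · rintro ⟨⟨s, t⟩, hnd, hcard, hs, ht, hsum⟩
    dsimp only at hnd hcard hs ht hsum
    have hpos : ∀ {x : ℕ}, x ∈ s + t → 0 < x := by
      intro x hx
      rcases Multiset.mem_add.mp hx with h | h
      · exact hs x h
      · exact ht x h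
    have hsum2 : (s + t).sum = n := by rw [Multiset.sum_add]; exact hsum
    have hS : s.toFinset ∈ (Nat.Partition.mk (s + t) hpos
        hsum2).parts.toFinset.powersetCard j := by
      refine Finset.mem_powersetCard.mpr ⟨?_, ?_⟩
      · exact Multiset.toFinset_subset.mpr (Multiset.subset_of_le (Multiset.le_add_right s t))
      · rw [Multiset.toFinset_card_of_nodup hnd, hcard]
    refine ⟨⟨Nat.Partition.mk (s + t) hpos hsum2, ⟨s.toFinset, hS⟩⟩, ?_⟩
    apply Subtype.ext
    have hval : s.toFinset.val = s := by
      rw [Multiset.toFinset_val, Multiset.dedup_eq_self.mpr hnd]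
    show (s.toFinset.val, (s + t) - s.toFinset.val) = (s, t)
    rw [hval, add_tsub_cancel_left]

def toPairsB (j n : ℕ) : TypeB j n → Pairs j n := fun x =>
  ⟨(x.2.1.val.parts, x.2.2.parts),
    x.2.1.prop.2, x.2.1.prop.1,
    (fun y hy => x.2.1.val.parts_pos hy),
    (fun y hy => x.2.2.parts_pos hy), by
      rw [x.2.1.val.parts_sum, x.2.2.parts_sum]
      have := x.1.isLt
      omega⟩

lemma toPairsB_bij (j n : ℕ) : Function.Bijective (toPairsB j n) := by
  constructor
  · rintro ⟨⟨m, hm⟩, ⟨σ, hσ⟩, τ⟩ ⟨⟨m', hm'⟩, ⟨σ', hσ'⟩, τ'⟩ h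
    have h1 : σ.parts = σ'.parts := congrArg (fun z : Pairs j n => z.val.1) h
    have h2 : τ.parts = τ'.parts := congrArg (fun z : Pairs j n => z.val.2) h
    have e1 : σ.parts.sum = m := σ.parts_sum
    have e2 : σ'.parts.sum = m' := σ'.parts_sum
    have hmm : m = m' := by rw [← e1, ← e2, h1]
    subst hmm
    have hσσ : σ = σ' := Nat.Partition.ext h1
    subst hσσ
    have hττ : τ = τ' := Nat.Partition.ext h2
    subst hττ
    rfl
  · rintro ⟨⟨s, t⟩, hnd, hcard, hs, ht, hsum⟩
    dsimp only at hnd hcard hs ht hsum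
    have hm : s.sum < n + 1 := by omega
    refine ⟨⟨⟨s.sum, hm⟩, ⟨⟨s, fun hy => hs _ hy, rfl⟩, hcard, hnd⟩,
      ⟨t, fun hy => ht _ hy, ?_⟩⟩, rfl⟩
    show t.sum = n - s.sum
    omega

lemma card_eq (j n : ℕ) : Fintype.card (TypeB j n) = Fintype.card (TypeA j n) :=
  Fintype.card_congr
    ((Equiv.ofBijective _ (toPairsB_bij j n)).trans
      (Equiv.ofBijective _ (toPairsA_bij j n)).symm)

lemma card_A (j n : ℕ) :
    Fintype.card (TypeA j n) =
      ∑ i ∈ range (n + 1), i.choose j * numPartitionsWithKMagnitudes i n := by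
  have hcs : Fintype.card (TypeA j n) = ∑ π : Nat.Partition n,
      Fintype.card {S : Finset ℕ // S ∈ π.parts.toFinset.powersetCard j} :=
    Fintype.card_sigma
  rw [hcs]
  have h1 : ∀ π : Nat.Partition n,
      Fintype.card {S : Finset ℕ // S ∈ π.parts.toFinset.powersetCard j} =
        (π.parts.toFinset.card).choose j := by
    intro π
    rw [Fintype.card_coe, Finset.card_powersetCard]
  calc ∑ π : Nat.Partition n,
        Fintype.card {S : Finset ℕ // S ∈ π.parts.toFinset.powersetCard j}
      = ∑ π : Nat.Partition n, (π.parts.toFinset.card).choose j :=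
        Finset.sum_congr rfl (fun π _ => h1 π)
    _ = ∑ i ∈ range (n + 1), ∑ π ∈ Finset.univ.filter
          (fun π : Nat.Partition n => π.parts.toFinset.card = i),
          (π.parts.toFinset.card).choose j := by
        rw [Finset.sum_fiberwise_of_maps_to]
        intro π _
        exact Finset.mem_range.mpr (Nat.lt_succ_of_le (d_le n π))
    _ = ∑ i ∈ range (n + 1), i.choose j * numPartitionsWithKMagnitudes i n := by
        refine Finset.sum_congr rfl (fun i _ => ?_)
        rw [numPartitionsWithKMagnitudes, Fintype.card_subtype]
        rw [Finset.sum_congr rfl (fun π hπ => by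
          rw [(Finset.mem_filter.mp hπ).2])]
        rw [Finset.sum_const, smul_eq_mul, mul_comm]

lemma card_B (j n : ℕ) :
    Fintype.card (TypeB j n) =
      ∑ m ∈ range (n + 1), numDistinctPartitionsWithKParts j m * numPartitions (n - m) := by
  have hcs : Fintype.card (TypeB j n) = ∑ m : Fin (n + 1),
      Fintype.card ({σ : Nat.Partition (m : ℕ) // σ.parts.card = j ∧ σ.parts.Nodup} ×
        Nat.Partition (n - (m : ℕ))) :=
    Fintype.card_sigma
  rw [hcs, ← Fin.sum_univ_eq_sum_range]
  refine Finset.sum_congr rfl (fun m _ => ?_)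
  rw [Fintype.card_prod]
  rfl

lemma count_lemma (j n : ℕ) :
    ∑ m ∈ range (n + 1), numDistinctPartitionsWithKParts j m * numPartitions (n - m) =
      ∑ i ∈ range (n + 1), i.choose j * numPartitionsWithKMagnitudes i n := by
  rw [← card_B, card_eq, card_A]

lemma delta (k n i : ℕ) (hk : k ≤ n) (hi : i ≤ n) :
    (∑ j ∈ Icc k n, (-1 : ℤ) ^ (j - k) * (j.choose k : ℤ) * (i.choose j : ℤ)) =
      if i = k then 1 else 0 := by
  by_cases hik : i < k
  · rw [if_neg (by omega)]
    apply Finset.sum_eq_zero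
    intro j hj
    have : i.choose j = 0 := Nat.choose_eq_zero_of_lt (by
      have := (Finset.mem_Icc.mp hj).1; omega)
    rw [this]; push_cast; ring
  · push_neg at hik
    have hsub : Icc k i ⊆ Icc k n := Finset.Icc_subset_Icc_right hi
    rw [← Finset.sum_subset hsub (by
      intro j hj hj'
      have h1 := Finset.mem_Icc.mp hj
      have : i < j := by
        by_contra h
        exact hj' (Finset.mem_Icc.mpr ⟨h1.1, by omega⟩)
      rw [Nat.choose_eq_zero_of_lt this]; push_cast; ring)]
    have hterm : ∀ j ∈ Icc k i,
        (-1 : ℤ) ^ (j - k) * (j.choose k : ℤ) * (i.choose j : ℤ) =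
          (i.choose k : ℤ) * ((-1 : ℤ) ^ (j - k) * ((i - k).choose (j - k) : ℤ)) := by
      intro j hj
      obtain ⟨hkj, hji⟩ := Finset.mem_Icc.mp hj
      have h := Nat.choose_mul (n := i) hkj
      have hc : (i.choose j : ℤ) * (j.choose k : ℤ) =
          (i.choose k : ℤ) * ((i - k).choose (j - k) : ℤ) := by exact_mod_cast h
      linear_combination ((-1 : ℤ) ^ (j - k)) * hc
    rw [Finset.sum_congr rfl hterm, ← Finset.mul_sum]
    have hre : ∑ j ∈ Icc k i, (-1 : ℤ) ^ (j - k) * ((i - k).choose (j - k) : ℤ) =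
        ∑ t ∈ range (i - k + 1), (-1 : ℤ) ^ t * ((i - k).choose t : ℤ) := by
      rw [← Finset.Ico_add_one_right_eq_Icc, Finset.sum_Ico_eq_sum_range]
      refine Finset.sum_congr (by congr 1; omega) (fun t _ => ?_)
      rw [Nat.add_sub_cancel_left]
    rw [hre, Int.alternating_sum_range_choose]
    by_cases h : i = k
    · subst h; simp
    · rw [if_neg (by omega), if_neg h, mul_zero]

end MercaAux

open MercaAux in
theorem merca_identity (k n : ℕ) :
    (numPartitionsWithKMagnitudes k n : ℤ) =
      ∑ m ∈ Finset.Icc ((k + 1).choose 2) n, mercaA k m * (numPartitions (n - m) : ℤ) := by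
  by_cases hkn : n < k
  · -- degenerate case: both sides are 0
    have hT : n < (k + 1).choose 2 := lt_of_lt_of_le hkn (tri_le k)
    rw [Finset.Icc_eq_empty (by omega), Finset.sum_empty]
    have : numPartitionsWithKMagnitudes k n = 0 := by
      rw [numPartitionsWithKMagnitudes, Fintype.card_eq_zero_iff]
      constructor
      rintro ⟨π, hπ⟩
      have := d_le n π
      omega
    rw [this]; rfl
  · push_neg at hkn
    set T := (k + 1).choose 2 with hT
    have step0 : ∑ m ∈ Icc T n, mercaA k m * (numPartitions (n - m) : ℤ) =
        ∑ m ∈ Icc T n, ∑ j ∈ Icc k m,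
          (-1 : ℤ) ^ (j - k) * (j.choose k : ℤ) *
            (numDistinctPartitionsWithKParts j m : ℤ) * (numPartitions (n - m) : ℤ) := by
      refine Finset.sum_congr rfl (fun m _ => ?_)
      rw [mercaA, Finset.sum_mul]
    have step1 : ∀ m ∈ Icc T n,
        (∑ j ∈ Icc k m,
          (-1 : ℤ) ^ (j - k) * (j.choose k : ℤ) *
            (numDistinctPartitionsWithKParts j m : ℤ) * (numPartitions (n - m) : ℤ)) =
        ∑ j ∈ Icc k n,
          (-1 : ℤ) ^ (j - k) * (j.choose k : ℤ) *
            (numDistinctPartitionsWithKParts j m : ℤ) * (numPartitions (n - m) : ℤ) := by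
      intro m hm
      obtain ⟨hm1, hm2⟩ := Finset.mem_Icc.mp hm
      refine Finset.sum_subset (Finset.Icc_subset_Icc_right hm2) ?_
      intro j hj hj'
      obtain ⟨hj1, hj2⟩ := Finset.mem_Icc.mp hj
      have hmj : m < j := by
        by_contra h
        exact hj' (Finset.mem_Icc.mpr ⟨hj1, by omega⟩)
      have : numDistinctPartitionsWithKParts j m = 0 :=
        q_eq_zero (lt_of_lt_of_le hmj (tri_le j))
      rw [this]; push_cast; ring
    have step2 : ∀ j ∈ Icc k n,
        (∑ m ∈ Icc T n,
          (-1 : ℤ) ^ (j - k) * (j.choose k : ℤ) *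
            (numDistinctPartitionsWithKParts j m : ℤ) * (numPartitions (n - m) : ℤ)) =
        ∑ m ∈ range (n + 1),
          (-1 : ℤ) ^ (j - k) * (j.choose k : ℤ) *
            (numDistinctPartitionsWithKParts j m : ℤ) * (numPartitions (n - m) : ℤ) := by
      intro j hj
      obtain ⟨hj1, hj2⟩ := Finset.mem_Icc.mp hj
      refine Finset.sum_subset ?_ ?_
      · intro m hm
        obtain ⟨hm1, hm2⟩ := Finset.mem_Icc.mp hm
        exact Finset.mem_range.mpr (by omega)
      · intro m hm hm'
        have hmn : m ≤ n := by have := Finset.mem_range.mp hm; omega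
        have hmT : m < T := by
          by_contra h
          exact hm' (Finset.mem_Icc.mpr ⟨by omega, hmn⟩)
        have hTj : T ≤ (j + 1).choose 2 := Nat.choose_le_choose 2 (by omega)
        have : numDistinctPartitionsWithKParts j m = 0 := q_eq_zero (by omega)
        rw [this]; push_cast; ring
    rw [step0, Finset.sum_congr rfl step1, Finset.sum_comm,
      Finset.sum_congr rfl step2]
    have step3 : ∀ j ∈ Icc k n,
        (∑ m ∈ range (n + 1),
          (-1 : ℤ) ^ (j - k) * (j.choose k : ℤ) *
            (numDistinctPartitionsWithKParts j m : ℤ) * (numPartitions (n - m) : ℤ)) =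
        ∑ i ∈ range (n + 1),
          (-1 : ℤ) ^ (j - k) * (j.choose k : ℤ) *
            (i.choose j : ℤ) * (numPartitionsWithKMagnitudes i n : ℤ) := by
      intro j _
      have hcast : (∑ m ∈ range (n + 1),
            (numDistinctPartitionsWithKParts j m : ℤ) * (numPartitions (n - m) : ℤ)) =
          ∑ i ∈ range (n + 1),
            (i.choose j : ℤ) * (numPartitionsWithKMagnitudes i n : ℤ) := by
        have := congrArg (Nat.cast : ℕ → ℤ) (count_lemma j n)
        push_cast at this
        exact this
      calc (∑ m ∈ range (n + 1),
            (-1 : ℤ) ^ (j - k) * (j.choose k : ℤ) *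
              (numDistinctPartitionsWithKParts j m : ℤ) * (numPartitions (n - m) : ℤ)) =
          (-1 : ℤ) ^ (j - k) * (j.choose k : ℤ) *
            ∑ m ∈ range (n + 1),
              (numDistinctPartitionsWithKParts j m : ℤ) * (numPartitions (n - m) : ℤ) := by
            rw [Finset.mul_sum]; exact Finset.sum_congr rfl (fun m _ => by ring)
        _ = (-1 : ℤ) ^ (j - k) * (j.choose k : ℤ) *
            ∑ i ∈ range (n + 1),
              (i.choose j : ℤ) * (numPartitionsWithKMagnitudes i n : ℤ) := by rw [hcast]
        _ = _ := by rw [Finset.mul_sum]; exact Finset.sum_congr rfl (fun i _ => by ring)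
    rw [Finset.sum_congr rfl step3, Finset.sum_comm]
    have step4 : ∀ i ∈ range (n + 1),
        (∑ j ∈ Icc k n,
          (-1 : ℤ) ^ (j - k) * (j.choose k : ℤ) *
            (i.choose j : ℤ) * (numPartitionsWithKMagnitudes i n : ℤ)) =
        (if i = k then (numPartitionsWithKMagnitudes i n : ℤ) else 0) := by
      intro i hi
      have hi' : i ≤ n := by have := Finset.mem_range.mp hi; omega
      have hd := delta k n i hkn hi'
      calc (∑ j ∈ Icc k n,
            (-1 : ℤ) ^ (j - k) * (j.choose k : ℤ) *
              (i.choose j : ℤ) * (numPartitionsWithKMagnitudes i n : ℤ)) =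
          (∑ j ∈ Icc k n,
            (-1 : ℤ) ^ (j - k) * (j.choose k : ℤ) * (i.choose j : ℤ)) *
            (numPartitionsWithKMagnitudes i n : ℤ) := by
            rw [Finset.sum_mul]
        _ = (if i = k then 1 else 0) * (numPartitionsWithKMagnitudes i n : ℤ) := by rw [hd]
        _ = _ := by split <;> simp
    rw [Finset.sum_congr rfl step4, Finset.sum_ite_eq' (range (n + 1)) k
      (fun i => (numPartitionsWithKMagnitudes i n : ℤ)),
      if_pos (Finset.mem_range.mpr (by omega))]
end

section
/- For every integer n ≥ 0, Σ_{k ≥ 0, C(k+1,2) ≤ n} p(n − C(k+1,2)) = Σ_{m=0}^{n} q(m) · q(n − m), where the left-hand sum ranges over all k with C(k+1,2) ≤ n. -/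
/-- `q n`: the number of partitions of `n` into distinct parts. -/
def numDistinctPartitions (n : ℕ) : ℕ :=
  Fintype.card {π : Nat.Partition n // π.parts.Nodup}

open PowerSeries

namespace GaussAux

noncomputable section

variable {α : Type*}

open Finset

open scoped Classical

/-- A convenience constructor for the power series whose coefficients indicate a subset. -/
def indicatorSeries (α : Type*) [Semiring α] (s : Set ℕ) : PowerSeries α :=
  PowerSeries.mk fun n => if n ∈ s then 1 else 0

theorem coeff_indicator (s : Set ℕ) [Semiring α] (n : ℕ) :
    coeff (R := α) n (indicatorSeries _ s) = if n ∈ s then 1 else 0 :=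
  coeff_mk _ _

theorem coeff_indicator_pos (s : Set ℕ) [Semiring α] (n : ℕ) (h : n ∈ s) :
    coeff (R := α) n (indicatorSeries _ s) = 1 := by rw [coeff_indicator, if_pos h]

theorem coeff_indicator_neg (s : Set ℕ) [Semiring α] (n : ℕ) (h : n ∉ s) :
    coeff (R := α) n (indicatorSeries _ s) = 0 := by rw [coeff_indicator, if_neg h]

theorem constantCoeff_indicator (s : Set ℕ) [Semiring α] :
    constantCoeff (R := α) (indicatorSeries _ s) = if 0 ∈ s then 1 else 0 :=
  rfl

theorem two_series (i : ℕ) [Semiring α] :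
    1 + (X : PowerSeries α) ^ i.succ = indicatorSeries α {0, i.succ} := by
  ext n
  simp only [coeff_indicator, coeff_one, coeff_X_pow, Set.mem_insert_iff, Set.mem_singleton_iff,
    map_add]
  cases' n with d
  · simp [(Nat.succ_ne_zero i).symm]
  · simp [Nat.succ_ne_zero d]

theorem num_series' [Field α] (i : ℕ) :
    (1 - (X : PowerSeries α) ^ (i + 1))⁻¹ = indicatorSeries α {k | i + 1 ∣ k} := by
  rw [PowerSeries.inv_eq_iff_mul_eq_one]
  · ext n
    cases n with
    | zero => simp [mul_sub, zero_pow, constantCoeff_indicator]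
    | succ n =>
      simp only [coeff_one, if_false, mul_sub, mul_one, coeff_indicator,
        LinearMap.map_sub, reduceCtorEq]
      simp_rw [coeff_mul, coeff_X_pow, coeff_indicator, @boole_mul _ _ _ _]
      erw [@sum_ite _ _ _ _ _ (fun _ => Classical.propDecidable _), sum_ite]
      simp_rw [@filter_filter _ _ _ _ _, sum_const_zero, add_zero, sum_const, nsmul_eq_mul, mul_one,
        sub_eq_iff_eq_add, zero_add]
      symm
      split_ifs with h
      · suffices #{a ∈ antidiagonal (n + 1) | i + 1 ∣ a.fst ∧ a.snd = i + 1} = 1 by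
          simp only [Set.mem_setOf_eq]; convert congr_arg ((↑) : ℕ → α) this; norm_cast
        rw [card_eq_one]
        cases' h with p hp
        refine ⟨((i + 1) * (p - 1), i + 1), ?_⟩
        ext ⟨a₁, a₂⟩
        simp only [mem_filter, Prod.mk_inj, HasAntidiagonal.mem_antidiagonal, mem_singleton]
        constructor
        · rintro ⟨a_left, ⟨a, rfl⟩, rfl⟩
          refine ⟨?_, rfl⟩
          rw [Nat.mul_sub_left_distrib, ← hp, ← a_left, mul_one, Nat.add_sub_cancel]
        · rintro ⟨rfl, rfl⟩
          match p with
          | 0 => rw [mul_zero] at hp; cases hp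
          | p + 1 => rw [hp]; simp [mul_add]
      · suffices #{a ∈ antidiagonal (n + 1) | i + 1 ∣ a.fst ∧ a.snd = i + 1} = 0 by
          simp only [Set.mem_setOf_eq]; convert congr_arg ((↑) : ℕ → α) this; norm_cast
        rw [card_eq_zero]
        apply eq_empty_of_forall_notMem
        simp only [Prod.forall, mem_filter, not_and, HasAntidiagonal.mem_antidiagonal]
        rintro _ h₁ h₂ ⟨a, rfl⟩ rfl
        apply h
        simp [← h₂]
  · simp [zero_pow]

-- The main workhorse of the partition theorem proof (copied from the Mathlib Archive).
theorem partialGF_prop (α : Type*) [CommSemiring α] (n : ℕ) (s : Finset ℕ) (hs : ∀ i ∈ s, 0 < i)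
    (c : ℕ → Set ℕ) (hc : ∀ i, i ∉ s → 0 ∈ c i) :
    #{p : n.Partition | (∀ j, p.parts.count j ∈ c j) ∧ ∀ j ∈ p.parts, j ∈ s} =
      coeff (R := α) n (∏ i ∈ s, indicatorSeries α ((· * i) '' c i)) := by
  simp_rw [coeff_prod, coeff_indicator, prod_boole, sum_boole]
  apply congr_arg
  simp only [mem_univ, forall_true_left, not_and, not_forall, exists_prop,
    Set.mem_image, not_exists]
  set φ : (a : Nat.Partition n) →
    a ∈ filter (fun p ↦ (∀ (j : ℕ), Multiset.count j p.parts ∈ c j) ∧ ∀ j ∈ p.parts, j ∈ s) univ →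
    ℕ →₀ ℕ := fun p _ => {
      toFun := fun i => Multiset.count i p.parts • i
      support := Finset.filter (fun i => i ≠ 0) p.parts.toFinset
      mem_support_toFun := fun a => by
        simp only [smul_eq_mul, ne_eq, mul_eq_zero, Multiset.count_eq_zero]
        rw [not_or, not_not]
        simp only [Multiset.mem_toFinset, not_not, mem_filter] }
  refine Finset.card_bij φ ?_ ?_ ?_
  · intro a ha
    simp only [φ, not_forall, not_exists, not_and, exists_prop, mem_filter]
    rw [mem_finsuppAntidiag]
    dsimp only [ne_eq, smul_eq_mul, id_eq, eq_mpr_eq_cast, le_eq_subset, Finsupp.coe_mk]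
    simp only [mem_univ, forall_true_left, not_and, not_forall, exists_prop,
      mem_filter, true_and] at ha
    refine ⟨⟨?_, fun i ↦ ?_⟩, fun i _ ↦ ⟨a.parts.count i, ha.1 i, rfl⟩⟩
    · conv_rhs => simp [← a.parts_sum]
      rw [sum_multiset_count_of_subset _ s]
      · simp only [smul_eq_mul]
      · intro i
        simp only [Multiset.mem_toFinset, not_not, mem_filter]
        apply ha.2
    · simp only [ne_eq, Multiset.mem_toFinset, not_not, mem_filter, and_imp]
      exact fun hi _ ↦ ha.2 i hi
  · intro p₁ hp₁ p₂ hp₂ h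
    apply Nat.Partition.ext
    simp only [true_and, mem_univ, mem_filter] at hp₁ hp₂
    ext i
    simp only [φ, ne_eq, Multiset.mem_toFinset, not_not, smul_eq_mul, Finsupp.mk.injEq] at h
    by_cases hi : i = 0
    · rw [hi]
      rw [Multiset.count_eq_zero_of_notMem]
      · rw [Multiset.count_eq_zero_of_notMem]
        intro a; exact Nat.lt_irrefl 0 (hs 0 (hp₂.2 0 a))
      intro a; exact Nat.lt_irrefl 0 (hs 0 (hp₁.2 0 a))
    · rw [← mul_left_inj' hi]
      rw [funext_iff] at h
      exact h.2 i
  · simp only [φ, mem_filter, mem_finsuppAntidiag, mem_univ, exists_prop, true_and, and_assoc]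
    rintro f ⟨hf, hf₃, hf₄⟩
    have hf' : f ∈ finsuppAntidiag s n := mem_finsuppAntidiag.mpr ⟨hf, hf₃⟩
    simp only [mem_finsuppAntidiag] at hf'
    refine ⟨⟨∑ i ∈ s, Multiset.replicate (f i / i) i, ?_, ?_⟩, ?_, ?_, ?_⟩
    · intro i hi
      simp only [exists_prop, Multiset.mem_sum, mem_map, Function.Embedding.coeFn_mk] at hi
      rcases hi with ⟨t, ht, z⟩
      apply hs
      rwa [Multiset.eq_of_mem_replicate z]
    · simp_rw [Multiset.sum_sum, Multiset.sum_replicate, Nat.nsmul_eq_mul]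
      rw [← hf'.1]
      refine sum_congr rfl fun i hi => Nat.div_mul_cancel ?_
      rcases hf₄ i hi with ⟨w, _, hw₂⟩
      rw [← hw₂]
      exact dvd_mul_left _ _
    · intro i
      simp_rw [Multiset.count_sum', Multiset.count_replicate, sum_ite_eq']
      split_ifs with h
      · rcases hf₄ i h with ⟨w, hw₁, hw₂⟩
        rwa [← hw₂, Nat.mul_div_cancel _ (hs i h)]
      · exact hc _ h
    · intro i hi
      rw [Multiset.mem_sum] at hi
      rcases hi with ⟨j, hj₁, hj₂⟩
      rwa [Multiset.eq_of_mem_replicate hj₂]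
    · ext i
      simp_rw [Multiset.count_sum', Multiset.count_replicate, sum_ite_eq']
      simp only [ne_eq, Multiset.mem_toFinset, not_not, smul_eq_mul, ite_mul,
        zero_mul, Finsupp.coe_mk]
      split_ifs with h
      · apply Nat.div_mul_cancel
        rcases hf₄ i h with ⟨w, _, hw₂⟩
        apply Dvd.intro_left _ hw₂
      · apply symm
        rw [← Finsupp.notMem_support_iff]
        exact notMem_mono hf'.2 h

/-- The partial product for the generating function for distinct partitions. -/
def partialDistinctGF (m : ℕ) [CommSemiring α] :=
  ∏ i ∈ range m, (1 + (X : PowerSeries α) ^ (i + 1))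

theorem partialDistinctGF_prop [CommSemiring α] (n m : ℕ) :
    #{p : n.Partition |
        p.parts.Nodup ∧ ∀ j ∈ p.parts, j ∈ (range m).map ⟨Nat.succ, Nat.succ_injective⟩} =
      coeff (R := α) n (partialDistinctGF m) := by
  rw [partialDistinctGF]
  convert partialGF_prop α n
    ((range m).map ⟨Nat.succ, Nat.succ_injective⟩) _ (fun _ => {0, 1}) (fun _ _ => Or.inl rfl)
    using 2
  · congr! with p
    rw [Multiset.nodup_iff_count_le_one]
    congr! 1 with i
    rcases Multiset.count i p.parts with (_ | _ | ms) <;> simp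
  · simp_rw [Finset.prod_map, two_series]
    congr with i
    simp [Set.image_pair]
  · simp only [mem_map, Function.Embedding.coeFn_mk]
    rintro i ⟨_, _, rfl⟩
    apply Nat.succ_pos

/-- If m is big enough, the partial product's coefficient counts the number of distinct
partitions -/
theorem distinctGF_prop [CommSemiring α] (n m : ℕ) (h : n < m + 1) :
    #(Nat.Partition.distincts n) = coeff (R := α) n (partialDistinctGF m) := by
  rw [← partialDistinctGF_prop, Nat.Partition.distincts]
  congr with p
  apply (and_iff_left _).symm
  intro i hi
  have : i ≤ n := by
    simpa [p.parts_sum] using Multiset.single_le_sum (fun _ _ => Nat.zero_le _) _ hi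
  simp only [exists_prop, mem_range, Function.Embedding.coeFn_mk, mem_map]
  refine ⟨i - 1, ?_, Nat.succ_pred_eq_of_pos (p.parts_pos hi)⟩
  rw [tsub_lt_iff_right (Nat.one_le_iff_ne_zero.mpr (p.parts_pos hi).ne')]
  exact lt_of_le_of_lt this h

/-- The partial product for the generating function for all partitions. -/
def partialFullGF (m : ℕ) [Field α] :=
  ∏ i ∈ range m, (1 - (X : PowerSeries α) ^ (i + 1))⁻¹

theorem partialFullGF_prop [Field α] (n m : ℕ) :
    #{p : n.Partition | ∀ j ∈ p.parts, j ∈ (range m).map ⟨Nat.succ, Nat.succ_injective⟩} =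
      coeff (R := α) n (partialFullGF m) := by
  rw [partialFullGF]
  convert partialGF_prop α n
    ((range m).map ⟨Nat.succ, Nat.succ_injective⟩) _ (fun _ => Set.univ) (fun _ _ => trivial)
    using 2
  · congr
    simp only [true_and, forall_const, Set.mem_univ]
  · rw [Finset.prod_map]
    simp_rw [num_series']
    congr! 2 with x
    ext k
    constructor
    · rintro ⟨p, rfl⟩
      refine ⟨p, ⟨⟩, ?_⟩
      apply mul_comm
    rintro ⟨a_w, -, rfl⟩
    apply Dvd.intro_left a_w rfl
  · simp only [mem_map, Function.Embedding.coeFn_mk]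
    rintro i ⟨_, _, rfl⟩
    apply Nat.succ_pos

/-- If m is big enough, the partial product's coefficient counts all partitions. -/
theorem fullGF_prop [Field α] (n m : ℕ) (h : n < m + 1) :
    (numPartitions n : α) = coeff (R := α) n (partialFullGF m) := by
  rw [← partialFullGF_prop]
  have : numPartitions n = #({p : n.Partition |
      ∀ j ∈ p.parts, j ∈ (range m).map ⟨Nat.succ, Nat.succ_injective⟩} : Finset _) := by
    rw [numPartitions, ← Finset.card_univ]
    congr 1
    symm
    apply Finset.filter_true_of_mem
    intro p _
    intro i hi
    have : i ≤ n := by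
      simpa [p.parts_sum] using Multiset.single_le_sum (fun _ _ => Nat.zero_le _) _ hi
    simp only [exists_prop, mem_range, Function.Embedding.coeFn_mk, mem_map]
    refine ⟨i - 1, ?_, Nat.succ_pred_eq_of_pos (p.parts_pos hi)⟩
    rw [tsub_lt_iff_right (Nat.one_le_iff_ne_zero.mpr (p.parts_pos hi).ne')]
    exact lt_of_le_of_lt this h
  rw [this]

end

end GaussAux

namespace GaussAux2
noncomputable section
open Finset Polynomial


/-- the `k`-th triangular number. -/
def tri (k : ℕ) : ℕ := (k + 1).choose 2

lemma tri_succ (k : ℕ) : tri (k + 1) = tri k + (k + 1) := by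
  show (k + 2).choose 2 = _
  rw [Nat.choose_succ_succ (k + 1) 1, Nat.choose_one_right]
  simp [tri]
  omega

lemma tri_add (a b : ℕ) : tri (a + b) = tri a + tri b + a * b := by
  induction b with
  | zero => simp [tri]
  | succ b ih =>
    have : a + (b + 1) = (a + b) + 1 := by omega
    rw [this, tri_succ, ih, tri_succ]
    ring

lemma two_tri (k : ℕ) : 2 * tri k = k * (k + 1) := by
  induction k with
  | zero => simp [tri]
  | succ k ih => rw [tri_succ, Nat.mul_add, ih]; ring

lemma tri_zero : tri 0 = 0 := by simp [tri]

lemma le_tri (k : ℕ) : k ≤ tri k := by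
  induction k with
  | zero => simp [tri]
  | succ k ih => rw [tri_succ]; omega

/-- ground set `{1, …, N}` -/
def sset (N : ℕ) : Finset ℕ := (range N).image Nat.succ

lemma sset_succ (N : ℕ) : sset (N + 1) = insert (N + 1) (sset N) := by
  simp [sset, range_add_one]

lemma not_mem_sset (N : ℕ) : N + 1 ∉ sset N := by
  simp [sset]

lemma card_sset (N : ℕ) : (sset N).card = N := by
  rw [sset, card_image_of_injective _ Nat.succ_injective, card_range]

lemma sum_range_succ_id (N : ℕ) : ∑ i ∈ range N, (i + 1) = tri N := by
  induction N with
  | zero => simp [tri]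
  | succ N ih => rw [Finset.sum_range_succ, ih, tri_succ]

lemma sum_sset (N : ℕ) : ∑ i ∈ sset N, i = tri N := by
  rw [sset, Finset.sum_image (fun a _ b _ h => Nat.succ_injective h)]
  exact sum_range_succ_id N

lemma mem_sset_pos (N : ℕ) {i : ℕ} (h : i ∈ sset N) : 1 ≤ i := by
  simp only [sset, mem_image, mem_range] at h
  omega

lemma mem_sset_le (N : ℕ) {i : ℕ} (h : i ∈ sset N) : i ≤ N := by
  simp only [sset, mem_image, mem_range] at h
  omega

/-- sum of `Polynomial.X^{Σ A}` over `k`-subsets `A` of `{1,…,N}`;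
this is `Polynomial.X ^ tri k` times the Gaussian binomial `[N, k]`. -/
def E (N k : ℕ) : Polynomial ℚ := ∑ A ∈ (sset N).powersetCard k, Polynomial.X ^ (∑ i ∈ A, i)

/-- `∏ (1 - Polynomial.X^i)` for `i = 1, …, k`. -/
def F (k : ℕ) : Polynomial ℚ := ∏ i ∈ range k, (1 - Polynomial.X ^ (i + 1))

lemma F_succ (k : ℕ) : F (k + 1) = F k * (1 - Polynomial.X ^ (k + 1)) := Finset.prod_range_succ _ _

lemma F_zero : F 0 = 1 := rfl

lemma E_zero (N : ℕ) : E N 0 = 1 := by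
  simp [E, Finset.powersetCard_zero]

lemma E_eq_zero_of_lt {N k : ℕ} (h : N < k) : E N k = 0 := by
  rw [E, Finset.powersetCard_eq_empty.2 (by rw [card_sset]; exact h), Finset.sum_empty]

lemma E_diag (N : ℕ) : E N N = Polynomial.X ^ tri N := by
  rw [E]
  have : (sset N).powersetCard N = {sset N} := by
    have h := Finset.powersetCard_self (sset N)
    rwa [card_sset] at h
  rw [this, Finset.sum_singleton, sum_sset]

lemma E_succ_succ (N k : ℕ) : E (N + 1) (k + 1) = E N (k + 1) + Polynomial.X ^ (N + 1) * E N k := by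
  rw [E, sset_succ, Finset.powersetCard_succ_insert (not_mem_sset N)]
  rw [Finset.sum_union]
  · congr 1
    rw [Finset.sum_image]
    · rw [E, Finset.mul_sum]
      apply Finset.sum_congr rfl
      intro A hA
      have hx : (N + 1) ∉ A := fun hmem =>
        (not_mem_sset N) ((Finset.mem_powersetCard.1 hA).1 hmem)
      rw [Finset.sum_insert hx, pow_add]
    · intro A hA B hB h
      have hxA : (N + 1) ∉ A := fun hmem =>
        (not_mem_sset N) ((Finset.mem_powersetCard.1 hA).1 hmem)
      have hxB : (N + 1) ∉ B := fun hmem =>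
        (not_mem_sset N) ((Finset.mem_powersetCard.1 hB).1 hmem)
      rw [← Finset.erase_insert hxA, ← Finset.erase_insert hxB, h]
  · rw [Finset.disjoint_left]
    intro A hA hA'
    have hxA : (N + 1) ∉ A := fun hmem =>
      (not_mem_sset N) ((Finset.mem_powersetCard.1 hA).1 hmem)
    simp only [Finset.mem_image] at hA'
    obtain ⟨B, -, rfl⟩ := hA'
    exact hxA (Finset.mem_insert_self _ _)

lemma tri_le_sum {k : ℕ} : ∀ (A : Finset ℕ), (∀ i ∈ A, 1 ≤ i) → A.card = k →
    tri k ≤ ∑ i ∈ A, i := by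
  induction k with
  | zero => intro A _ _; simp [tri]
  | succ k ih =>
    intro A hpos hcard
    have hne : A.Nonempty := Finset.card_pos.1 (by omega)
    set M := A.max' hne with hM
    have hsub : A ⊆ Finset.Icc 1 M := by
      intro i hi
      rw [Finset.mem_Icc]
      exact ⟨hpos i hi, Finset.le_max' A i hi⟩
    have hMk : k + 1 ≤ M := by
      have := Finset.card_le_card hsub
      rwa [hcard, Nat.card_Icc, Nat.add_sub_cancel] at this
    have hMA : M ∈ A := A.max'_mem hne
    have hsum : ∑ i ∈ A.erase M, i + M = ∑ i ∈ A, i := Finset.sum_erase_add _ _ hMA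
    have hek : (A.erase M).card = k := by
      rw [Finset.card_erase_of_mem hMA, hcard]
      omega
    have := ih (A.erase M) (fun i hi => hpos i (Finset.mem_of_mem_erase hi)) hek
    rw [tri_succ]
    omega

/-- The key identity: `E N k * F k * F (N - k) = Polynomial.X ^ tri k * F N`. -/
lemma G1 : ∀ N k, k ≤ N → E N k * (F k * F (N - k)) = Polynomial.X ^ tri k * F N := by
  intro N
  induction N with
  | zero =>
    intro k hk
    interval_cases k
    simp [E_zero, F_zero, tri_zero]
  | succ N ih =>
    intro k hk
    match k with
    | 0 => simp [E_zero, F_zero, tri_zero]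
    | k + 1 =>
      rcases eq_or_lt_of_le hk with heq | hlt
      · -- k + 1 = N + 1
        cases heq
        rw [E_diag]
        simp [F_zero]
      · have hkN : k + 1 ≤ N := by omega
        obtain ⟨c, rfl⟩ : ∃ c, N = k + 1 + c := ⟨N - (k + 1), by omega⟩
        have h1 := ih (k + 1) hkN
        have h2 := ih k (by omega)
        have e1 : k + 1 + c - (k + 1) = c := by omega
        have e2 : k + 1 + c - k = c + 1 := by omega
        have e3 : k + 1 + c + 1 - (k + 1) = c + 1 := by omega
        rw [e1] at h1
        rw [e2, F_succ] at h2
        rw [e3, E_succ_succ, F_succ c, F_succ (k + 1 + c), F_succ k] at *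
        rw [tri_succ] at *
        rw [pow_add] at *
        linear_combination (1 - Polynomial.X ^ (c + 1)) * h1 +
          Polynomial.X ^ (k + 1 + c + 1) * (1 - Polynomial.X ^ (k + 1)) * h2


lemma main_expand (m : ℕ) :
    ∏ i ∈ range (2 * m), ((Polynomial.X : Polynomial ℚ) ^ m + Polynomial.X ^ (i + 1)) =
      ∑ k ∈ range (2 * m + 1), Polynomial.X ^ (m * (2 * m - k)) * E (2 * m) k := by
  have h0 : ∏ i ∈ range (2 * m), ((Polynomial.X : Polynomial ℚ) ^ m + Polynomial.X ^ (i + 1)) =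
      ∏ i ∈ sset (2 * m), ((Polynomial.X : Polynomial ℚ) ^ i + Polynomial.X ^ m) := by
    rw [sset, Finset.prod_image (fun a _ b _ h => Nat.succ_injective h)]
    exact Finset.prod_congr rfl fun i _ => add_comm _ _
  rw [h0, Finset.prod_add, Finset.sum_powerset, card_sset]
  apply Finset.sum_congr rfl
  intro k _
  rw [E, Finset.mul_sum]
  apply Finset.sum_congr rfl
  intro A hA
  obtain ⟨hsub, hcard⟩ := Finset.mem_powersetCard.1 hA
  rw [Finset.prod_pow_eq_pow_sum A (fun i => i) Polynomial.X, Finset.prod_const, ← pow_mul]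
  rw [Finset.card_sdiff_of_subset hsub, card_sset, hcard, mul_comm]

lemma pair_expand (m : ℕ) :
    ∏ i ∈ range (2 * m), ((Polynomial.X : Polynomial ℚ) ^ m + Polynomial.X ^ (i + 1)) =
      Polynomial.X ^ (tri m + m * m) *
        ((∏ j ∈ range m, (1 + (Polynomial.X : Polynomial ℚ) ^ j)) * ∏ j ∈ range m, (1 + Polynomial.X ^ (j + 1))) := by
  rw [two_mul, Finset.prod_range_add]
  have part1 : ∏ i ∈ range m, ((Polynomial.X : Polynomial ℚ) ^ m + Polynomial.X ^ (i + 1)) =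
      Polynomial.X ^ tri m * ∏ j ∈ range m, (1 + (Polynomial.X : Polynomial ℚ) ^ j) := by
    have : ∀ i ∈ range m, ((Polynomial.X : Polynomial ℚ) ^ m + Polynomial.X ^ (i + 1)) =
        Polynomial.X ^ (i + 1) * (1 + Polynomial.X ^ (m - 1 - i)) := by
      intro i hi
      rw [mem_range] at hi
      rw [mul_add, mul_one, ← pow_add]
      have : i + 1 + (m - 1 - i) = m := by omega
      rw [this, add_comm]
    rw [Finset.prod_congr rfl this, Finset.prod_mul_distrib,
      Finset.prod_pow_eq_pow_sum _ _ _, sum_range_succ_id,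
      Finset.prod_range_reflect (fun j => 1 + (Polynomial.X : Polynomial ℚ) ^ j)]
  have part2 : ∏ i ∈ range m, ((Polynomial.X : Polynomial ℚ) ^ m + Polynomial.X ^ (m + i + 1)) =
      Polynomial.X ^ (m * m) * ∏ j ∈ range m, (1 + (Polynomial.X : Polynomial ℚ) ^ (j + 1)) := by
    have : ∀ i ∈ range m, ((Polynomial.X : Polynomial ℚ) ^ m + Polynomial.X ^ (m + i + 1)) =
        Polynomial.X ^ m * (1 + Polynomial.X ^ (i + 1)) := by
      intro i _
      rw [mul_add, mul_one, ← pow_add, show m + (i + 1) = m + i + 1 from by omega]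
    rw [Finset.prod_congr rfl this, Finset.prod_mul_distrib, Finset.prod_const, ← pow_mul,
      card_range]
  rw [part1, part2, pow_add]
  ring


/-- the "offset" triangular value associated to column `k` (charge `|k - m|`-ish). -/
def tval (m k : ℕ) : ℕ := if m ≤ k then tri (k - m) else tri (m - k - 1)

lemma arith1 {m k : ℕ} (hk : k ≤ 2 * m) :
    m * (2 * m - k) + tri k = tri m + m * m + tval m k := by
  rcases le_or_gt m k with h | h
  · obtain ⟨j, rfl⟩ : ∃ j, k = m + j := ⟨k - m, by omega⟩
    have h2 : tval m (m + j) = tri j := by simp [tval]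
    rw [h2, tri_add m j, show 2 * m - (m + j) = m - j from by omega]
    obtain ⟨d, rfl⟩ : ∃ d, m = j + d := ⟨m - j, by omega⟩
    rw [show j + d - j = d from by omega]
    zify
    ring
  · obtain ⟨i, rfl⟩ : ∃ i, m = k + (i + 1) := ⟨m - k - 1, by omega⟩
    have h2 : tval (k + (i + 1)) k = tri i := by
      rw [tval, if_neg (by omega), show k + (i + 1) - k - 1 = i from by omega]
    have h6 := two_tri i
    rw [h2, tri_add k (i + 1), tri_succ i, show 2 * (k + (i + 1)) - k = k + 2 * i + 2 from by omega]
    zify at h6 ⊢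
    linear_combination (-1 : ℤ) * h6

lemma F_ne_zero (t : ℕ) : F t ≠ 0 := by
  intro h
  have h0 := congrArg (Polynomial.eval 0) h
  rw [F, Polynomial.eval_prod] at h0
  simp at h0

lemma F_add (a b : ℕ) : F (a + b) = F a * ∏ i ∈ range b, (1 - Polynomial.X ^ (a + i + 1)) := by
  rw [F, F, Finset.prod_range_add]

lemma cast_prod_one_sub (s : Finset ℕ) (f : ℕ → ℕ) :
    ((∏ i ∈ s, (1 - Polynomial.X ^ f i) : Polynomial ℚ) : PowerSeries ℚ) =
      ∏ i ∈ s, (1 - PowerSeries.X ^ f i) := by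
  rw [← Polynomial.coeToPowerSeries.ringHom_apply, map_prod]
  apply Finset.prod_congr rfl
  intro i _
  simp [Polynomial.coeToPowerSeries.ringHom_apply]

lemma cast_prod_one_add (s : Finset ℕ) (f : ℕ → ℕ) :
    ((∏ i ∈ s, (1 + Polynomial.X ^ f i) : Polynomial ℚ) : PowerSeries ℚ) =
      ∏ i ∈ s, (1 + PowerSeries.X ^ f i) := by
  rw [← Polynomial.coeToPowerSeries.ringHom_apply, map_prod]
  apply Finset.prod_congr rfl
  intro i _
  simp [Polynomial.coeToPowerSeries.ringHom_apply]

lemma F_mul_fullGF (k : ℕ) : ((F k : Polynomial ℚ) : PowerSeries ℚ) * GaussAux.partialFullGF k = 1 := by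
  rw [GaussAux.partialFullGF, F, cast_prod_one_sub (range k) (fun i => i + 1),
    ← Finset.prod_mul_distrib]
  apply Finset.prod_eq_one
  intro i _
  apply PowerSeries.mul_inv_cancel
  rw [RingHom.map_sub, RingHom.map_pow, PowerSeries.constantCoeff_one,
    PowerSeries.constantCoeff_X, zero_pow (Nat.succ_ne_zero i), sub_zero]
  exact one_ne_zero

lemma coeff_term {n m k : ℕ} (hm2 : 2 * n + 2 ≤ m) (hk : k ≤ 2 * m) :
    (PowerSeries.coeff (R := ℚ) (n + (tri m + m * m)))
        (((Polynomial.X ^ (m * (2 * m - k)) * E (2 * m) k : Polynomial ℚ) : PowerSeries ℚ)) =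
      if tval m k ≤ n then (numPartitions (n - tval m k) : ℚ) else 0 := by
  have harith := arith1 (m := m) (k := k) hk
  by_cases hvn : tval m k ≤ n
  · rw [if_pos hvn]
    have hkb : m - n - 1 ≤ k ∧ k ≤ m + n := by
      rw [tval] at hvn
      split_ifs at hvn with h
      · have := le_tri (k - m); omega
      · have := le_tri (m - k - 1); omega
    set w := n - tval m k with hw
    have hw1 : w ≤ n := by omega
    have hsplit : n + (tri m + m * m) = (w + tri k) + m * (2 * m - k) := by omega
    rw [hsplit, Polynomial.coe_mul, Polynomial.coe_pow, Polynomial.coe_X,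
      PowerSeries.coeff_X_pow_mul]
    -- key polynomial identity : E (2m) k * F k = X^(tri k) * tail
    have hF2m : F (2 * m) =
        F (2 * m - k) * ∏ i ∈ range k, (1 - Polynomial.X ^ (2 * m - k + i + 1)) := by
      have h := F_add (2 * m - k) k
      rwa [show 2 * m - k + k = 2 * m from by omega] at h
    have hEk : E (2 * m) k * F k =
        Polynomial.X ^ tri k * ∏ i ∈ range k, (1 - Polynomial.X ^ (2 * m - k + i + 1)) := by
      have hG := G1 (2 * m) k hk
      rw [hF2m] at hG
      apply mul_right_cancel₀ (F_ne_zero (2 * m - k))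
      linear_combination hG
    have hPS := congrArg (fun p : Polynomial ℚ => (↑p : PowerSeries ℚ)) hEk
    simp only [Polynomial.coe_mul, Polynomial.coe_pow, Polynomial.coe_X] at hPS
    rw [cast_prod_one_sub (range k) (fun i => 2 * m - k + i + 1)] at hPS
    have hEps : ((E (2 * m) k : Polynomial ℚ) : PowerSeries ℚ) =
        PowerSeries.X ^ tri k * (GaussAux.partialFullGF k *
          ∏ i ∈ range k, (1 - PowerSeries.X ^ (2 * m - k + i + 1))) := by
      calc ((E (2 * m) k : Polynomial ℚ) : PowerSeries ℚ)
          = ↑(E (2 * m) k) * (↑(F k) * GaussAux.partialFullGF k) := by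
            rw [F_mul_fullGF, mul_one]
        _ = (↑(E (2 * m) k) * ↑(F k)) * GaussAux.partialFullGF k := by ring
        _ = (PowerSeries.X ^ tri k *
              ∏ i ∈ range k, (1 - PowerSeries.X ^ (2 * m - k + i + 1))) *
              GaussAux.partialFullGF k := by rw [hPS]
        _ = PowerSeries.X ^ tri k * (GaussAux.partialFullGF k *
              ∏ i ∈ range k, (1 - PowerSeries.X ^ (2 * m - k + i + 1))) := by ring
    rw [hEps, PowerSeries.coeff_X_pow_mul,
      PowerSeries.coeff_mul_prod_one_sub_of_lt_order w (range k) _ _ (by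
        intro i _
        rw [PowerSeries.order_X_pow]
        exact_mod_cast (by omega : w < 2 * m - k + i + 1))]
    exact (GaussAux.fullGF_prop w k (by omega)).symm
  · rw [if_neg hvn, Polynomial.coeff_coe, E, Finset.mul_sum, Polynomial.finset_sum_coeff]
    apply Finset.sum_eq_zero
    intro A hA
    obtain ⟨hsub, hcard⟩ := Finset.mem_powersetCard.1 hA
    rw [← pow_add, Polynomial.coeff_X_pow, if_neg]
    have hts := tri_le_sum A (fun i hi => mem_sset_pos _ (hsub hi)) hcard
    omega

end
end GaussAux2

set_option maxHeartbeats 1000000 in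
theorem sum_partitions_shifted_triangular_eq_distinct_convolution (n : ℕ) :
    ∑ k ∈ (Finset.range (n + 1)).filter (fun k => (k + 1).choose 2 ≤ n),
        numPartitions (n - (k + 1).choose 2) =
      ∑ m ∈ Finset.range (n + 1), numDistinctPartitions m * numDistinctPartitions (n - m) := by
  classical
  open Finset GaussAux2 in
  have key : ((∑ k ∈ (Finset.range (n + 1)).filter (fun k => (k + 1).choose 2 ≤ n),
        numPartitions (n - (k + 1).choose 2) : ℕ) : ℚ) =
      ((∑ m ∈ Finset.range (n + 1),
        numDistinctPartitions m * numDistinctPartitions (n - m) : ℕ) : ℚ) := by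
    set m := 2 * n + 2 with hmdef
    have hm1 : 1 ≤ m := by omega
    -- the polynomial identity
    have hpoly := (GaussAux2.main_expand m).symm.trans (GaussAux2.pair_expand m)
    have hco := congrArg (fun p : Polynomial ℚ =>
      (PowerSeries.coeff (R := ℚ) (n + (tri m + m * m))) (↑p : PowerSeries ℚ)) hpoly
    -- left side of hco
    have hL : (PowerSeries.coeff (R := ℚ) (n + (tri m + m * m)))
        (((∑ k ∈ range (2 * m + 1), Polynomial.X ^ (m * (2 * m - k)) * E (2 * m) k :
          Polynomial ℚ) : PowerSeries ℚ)) =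
        2 * ∑ j ∈ range (n + 1),
          (if tri j ≤ n then (numPartitions (n - tri j) : ℚ) else 0) := by
      rw [Polynomial.coeff_coe, Polynomial.finset_sum_coeff]
      have hterm : ∀ k ∈ range (2 * m + 1),
          (Polynomial.X ^ (m * (2 * m - k)) * E (2 * m) k).coeff (n + (tri m + m * m)) =
            (if tval m k ≤ n then (numPartitions (n - tval m k) : ℚ) else 0) := by
        intro k hk
        rw [mem_range] at hk
        rw [← Polynomial.coeff_coe]
        exact coeff_term (le_refl _) (by omega)
      rw [Finset.sum_congr rfl hterm]
      -- reindex
      have hcut : ∀ M : ℕ, n + 1 ≤ M →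
          ∑ j ∈ range M, (if tri j ≤ n then (numPartitions (n - tri j) : ℚ) else 0) =
          ∑ j ∈ range (n + 1), (if tri j ≤ n then (numPartitions (n - tri j) : ℚ) else 0) := by
        intro M hM
        rw [← Finset.sum_subset (Finset.range_subset_range.2 hM)]
        intro j hj hj'
        rw [mem_range] at hj
        rw [mem_range, not_lt] at hj'
        rw [if_neg]
        have := le_tri j
        omega
      rw [show 2 * m + 1 = m + (m + 1) from by omega, Finset.sum_range_add]
      have hA : ∑ i ∈ range m,
          (if tval m i ≤ n then (numPartitions (n - tval m i) : ℚ) else 0) =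
          ∑ j ∈ range m, (if tri j ≤ n then (numPartitions (n - tri j) : ℚ) else 0) := by
        rw [← Finset.sum_range_reflect
          (fun j => if tri j ≤ n then (numPartitions (n - tri j) : ℚ) else 0) m]
        apply Finset.sum_congr rfl
        intro i hi
        rw [mem_range] at hi
        have : tval m i = tri (m - 1 - i) := by
          rw [tval, if_neg (by omega)]
          congr 1
          omega
        rw [this]
      have hB : ∑ i ∈ range (m + 1),
          (if tval m (m + i) ≤ n then (numPartitions (n - tval m (m + i)) : ℚ) else 0) =
          ∑ j ∈ range (m + 1), (if tri j ≤ n then (numPartitions (n - tri j) : ℚ) else 0) := by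
        apply Finset.sum_congr rfl
        intro i _
        have : tval m (m + i) = tri i := by simp [tval]
        rw [this]
      rw [hA, hB, hcut m (by omega), hcut (m + 1) (by omega)]
      ring
    -- right side of hco
    have hR : (PowerSeries.coeff (R := ℚ) (n + (tri m + m * m)))
        (((Polynomial.X ^ (tri m + m * m) *
          ((∏ j ∈ range m, (1 + Polynomial.X ^ j)) * ∏ j ∈ range m, (1 + Polynomial.X ^ (j + 1))) :
          Polynomial ℚ) : PowerSeries ℚ)) =
        2 * ∑ k ∈ range (n + 1),
          ((numDistinctPartitions k : ℚ) * (numDistinctPartitions (n - k) : ℚ)) := by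
      rw [Polynomial.coeff_coe, Polynomial.coeff_X_pow_mul, ← Polynomial.coeff_coe,
        Polynomial.coe_mul]
      have hP0 : ((∏ j ∈ range m, (1 + Polynomial.X ^ j) : Polynomial ℚ) : PowerSeries ℚ) =
          2 * GaussAux.partialDistinctGF (m - 1) := by
        have hsplit : (∏ j ∈ range m, (1 + Polynomial.X ^ j) : Polynomial ℚ) =
            (∏ i ∈ range (m - 1), (1 + Polynomial.X ^ (i + 1))) * (1 + 1) := by
          conv_lhs => rw [show m = (m - 1) + 1 from by omega]
          rw [Finset.prod_range_succ' (fun j => 1 + Polynomial.X ^ j) (m - 1), pow_zero]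
        rw [hsplit, Polynomial.coe_mul, cast_prod_one_add (range (m - 1)) (fun i => i + 1),
          Polynomial.coe_add, Polynomial.coe_one, GaussAux.partialDistinctGF]
        ring
      have hP1 : ((∏ j ∈ range m, (1 + Polynomial.X ^ (j + 1)) : Polynomial ℚ) : PowerSeries ℚ) =
          GaussAux.partialDistinctGF m := by
        rw [cast_prod_one_add (range m) (fun i => i + 1)]
        rfl
      rw [hP0, hP1, mul_assoc, two_mul, map_add]
      rw [← two_mul]
      congr 1
      rw [PowerSeries.coeff_mul, Finset.Nat.sum_antidiagonal_eq_sum_range_succ_mk]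
      apply Finset.sum_congr rfl
      intro k hk
      rw [mem_range] at hk
      have hqk : (PowerSeries.coeff (R := ℚ) k) (GaussAux.partialDistinctGF (m - 1) : PowerSeries ℚ) =
          (numDistinctPartitions k : ℚ) := by
        rw [← GaussAux.distinctGF_prop k (m - 1) (by omega)]
        congr 1
        rw [numDistinctPartitions, Nat.Partition.distincts, Fintype.card_subtype]
      have hqnk : (PowerSeries.coeff (R := ℚ) (n - k)) (GaussAux.partialDistinctGF m : PowerSeries ℚ) =
          (numDistinctPartitions (n - k) : ℚ) := by
        rw [← GaussAux.distinctGF_prop (n - k) m (by omega)]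
        congr 1
        rw [numDistinctPartitions, Nat.Partition.distincts, Fintype.card_subtype]
      rw [hqk, hqnk]
    rw [hL, hR] at hco
    have hco2 := mul_left_cancel₀ (two_ne_zero (α := ℚ)) hco
    -- convert to the statement
    have hLs : ∑ j ∈ range (n + 1),
        (if tri j ≤ n then (numPartitions (n - tri j) : ℚ) else 0) =
        ((∑ k ∈ (Finset.range (n + 1)).filter (fun k => (k + 1).choose 2 ≤ n),
          numPartitions (n - (k + 1).choose 2) : ℕ) : ℚ) := by
      rw [Finset.sum_filter]
      push_cast
      apply Finset.sum_congr rfl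
      intro j _
      simp only [tri]
      congr
    have hRs : ∑ k ∈ range (n + 1),
        ((numDistinctPartitions k : ℚ) * (numDistinctPartitions (n - k) : ℚ)) =
        ((∑ m' ∈ Finset.range (n + 1),
          numDistinctPartitions m' * numDistinctPartitions (n - m') : ℕ) : ℚ) := by
      push_cast
      rfl
    rw [hLs, hRs] at hco2
    exact hco2
  exact_mod_cast key
end

section
/- Let k, n ≥ 0 be integers with n ≥ C(k+1,2). Then q(k,n) = p_k(n − C(k+1,2)), i.e., the number of partitions of n into exactly k distinct parts equals the number of partitions of n − C(k+1,2) with no part greater than k. -/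
open Multiset

namespace DKAux

/-- `N s t` = number of elements of `s` that are `≥ t`. -/
def N (s : Multiset ℕ) (t : ℕ) : ℕ := s.countP (fun p => t ≤ p)

lemma N_anti (s : Multiset ℕ) {t t' : ℕ} (h : t ≤ t') : N s t' ≤ N s t := by
  unfold N
  induction s using Multiset.induction with
  | empty => simp
  | cons a s ih => simp only [countP_cons]; split_ifs <;> omega

lemma N_succ_add_count (s : Multiset ℕ) (v : ℕ) : N s v = N s (v + 1) + s.count v := by
  unfold N
  induction s using Multiset.induction with
  | empty => simp
  | cons a s ih =>
    simp only [countP_cons, count_cons]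
    split_ifs <;> omega

lemma countP_bind (p : ℕ → Prop) [DecidablePred p] (s : Multiset ℕ) (f : ℕ → Multiset ℕ) :
    (s.bind f).countP p = (s.map (fun a => (f a).countP p)).sum := by
  induction s using Multiset.induction with
  | empty => simp
  | cons a s ih => simp [Multiset.cons_bind, countP_add, ih]

lemma countP_replicate (p : ℕ → Prop) [DecidablePred p] (c x : ℕ) :
    (Multiset.replicate c x).countP p = if p x then c else 0 := by
  induction c with
  | zero => simp
  | succ c ih =>
    rw [Multiset.replicate_succ, countP_cons, ih]
    split_ifs <;> omega

lemma filter_le_range {j0 k : ℕ} (h : j0 < k) :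
    (Finset.range k).filter (fun j => j ≤ j0) = Finset.range (j0 + 1) := by
  ext t; simp only [Finset.mem_filter, Finset.mem_range]; omega

lemma sum_ite_le (d : ℕ → ℕ) {j0 k : ℕ} (h : j0 < k) :
    (∑ j ∈ Finset.range k, if j ≤ j0 then d j else 0) = ∑ j ∈ Finset.range (j0 + 1), d j := by
  rw [← Finset.sum_filter, filter_le_range h]

lemma card_filter_le {i k : ℕ} :
    ((Finset.range k).filter (fun j => i ≤ j)).card = k - i := by
  have : (Finset.range k).filter (fun j => i ≤ j) = Finset.Ico i k := by
    ext t; simp only [Finset.mem_filter, Finset.mem_range, Finset.mem_Ico]; omega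
  rw [this, Nat.card_Ico]

/-- Two strictly monotone maps with equal image multisets of `range k` agree below `k`. -/
lemma map_range_inj {k : ℕ} {f g : ℕ → ℕ} (hf : StrictMono f) (hg : StrictMono g)
    (h : (Multiset.range k).map f = (Multiset.range k).map g) : ∀ j < k, f j = g j := by
  haveI : IsAntisymm ℕ (· < ·) := ⟨fun a b h1 h2 => absurd h1 (not_lt.2 h2.le)⟩
  have hf' : ((List.range k).map f).Pairwise (· < ·) :=
    List.Pairwise.map f (fun a b hab => hf hab) (List.pairwise_lt_range (n := k))
  have hg' : ((List.range k).map g).Pairwise (· < ·) :=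
    List.Pairwise.map g (fun a b hab => hg hab) (List.pairwise_lt_range (n := k))
  have hlist : (List.range k).map f = (List.range k).map g := by
    refine List.Perm.eq_of_pairwise (fun a b _ _ h1 h2 => absurd h1 (not_lt.2 h2.le)) hf' hg' ?_
    rw [← Multiset.coe_eq_coe]
    exact h
  intro j hj
  have h1 : j < ((List.range k).map f).length := by simpa using hj
  have h2 : j < ((List.range k).map g).length := by simpa using hj
  have := congrArg (fun l => l.getD j 0) hlist
  simpa only [List.getD_eq_getElem _ _ h1, List.getD_eq_getElem _ _ h2,
    List.getElem_map, List.getElem_range] using this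

/-- The forward map on part multisets. -/
def Fparts (k : ℕ) (s : Multiset ℕ) : Multiset ℕ :=
  (Multiset.range k).map (fun j => j + 1 + N s (k - j))

lemma Fparts_mono (k : ℕ) (s : Multiset ℕ) :
    StrictMono (fun j => j + 1 + N s (k - j)) := by
  intro j j' hjj
  have h1 : N s (k - j) ≤ N s (k - j') := N_anti s (by omega)
  show j + 1 + N s (k - j) < j' + 1 + N s (k - j')
  omega

lemma Fparts_nodup (k : ℕ) (s : Multiset ℕ) : (Fparts k s).Nodup :=
  Multiset.Nodup.map (Fparts_mono k s).injective (Multiset.nodup_range k)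

lemma Fparts_card (k : ℕ) (s : Multiset ℕ) : (Fparts k s).card = k := by
  simp [Fparts]

lemma Fparts_pos (k : ℕ) (s : Multiset ℕ) {i : ℕ} (hi : i ∈ Fparts k s) : 0 < i := by
  rw [Fparts, Multiset.mem_map] at hi
  obtain ⟨j, _, rfl⟩ := hi
  omega

lemma sum_N (k : ℕ) (s : Multiset ℕ) (hs : ∀ p ∈ s, p ≤ k) :
    (∑ t ∈ Finset.range k, N s (t + 1)) = s.sum := by
  unfold N
  induction s using Multiset.induction with
  | empty => simp
  | cons a s ih =>
    have ha : a ≤ k := hs a (Multiset.mem_cons_self a s)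
    have hs' : ∀ p ∈ s, p ≤ k := fun p hp => hs p (Multiset.mem_cons_of_mem hp)
    simp only [countP_cons, Multiset.sum_cons]
    rw [Finset.sum_add_distrib, ih hs']
    have : (∑ t ∈ Finset.range k, if t + 1 ≤ a then 1 else 0) = a := by
      rw [Finset.sum_boole]
      have : (Finset.range k).filter (fun t => t + 1 ≤ a) = Finset.range a := by
        ext t; simp only [Finset.mem_filter, Finset.mem_range]; omega
      rw [this, Finset.card_range]
      simp
    omega

lemma Fparts_sum (k : ℕ) (s : Multiset ℕ) (hs : ∀ p ∈ s, p ≤ k) :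
    (Fparts k s).sum = (k + 1).choose 2 + s.sum := by
  have h0 : (Fparts k s).sum = ∑ j ∈ Finset.range k, (j + 1 + N s (k - j)) := rfl
  rw [h0, Finset.sum_add_distrib]
  have h1 : (∑ j ∈ Finset.range k, (j + 1)) = (k + 1).choose 2 := by
    have h2 := Finset.sum_range_succ' (fun i => i) k
    have h3 : (∑ i ∈ Finset.range (k + 1), i) = (k + 1).choose 2 := by
      rw [Finset.sum_range_id, Nat.choose_two_right]
    omega
  have h4 : (∑ j ∈ Finset.range k, N s (k - j)) = ∑ t ∈ Finset.range k, N s (t + 1) := by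
    rw [← Finset.sum_range_reflect (fun t => N s (t + 1)) k]
    refine Finset.sum_congr rfl ?_
    intro j hj
    rw [Finset.mem_range] at hj
    congr 1
    omega
  rw [h4, sum_N k s hs, h1]

variable {k n : ℕ}

/-- The forward map from bounded partitions to distinct partitions with `k` parts. -/
def Fmap (k n : ℕ) (h : (k + 1).choose 2 ≤ n)
    (π : {π : Nat.Partition (n - (k + 1).choose 2) // ∀ i ∈ π.parts, i ≤ k}) :
    {π : Nat.Partition n // π.parts.card = k ∧ π.parts.Nodup} :=
  ⟨⟨Fparts k π.1.parts, fun hi => Fparts_pos k π.1.parts hi, by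
      rw [Fparts_sum k π.1.parts π.2, π.1.parts_sum]; omega⟩,
    Fparts_card k π.1.parts, Fparts_nodup k π.1.parts⟩

lemma N_large {s : Multiset ℕ} (hs : ∀ p ∈ s, p ≤ k) {t : ℕ} (ht : k < t) : N s t = 0 := by
  rw [N, Multiset.countP_eq_zero]
  intro a ha
  have := hs a ha
  omega

lemma Fmap_inj (h : (k + 1).choose 2 ≤ n) : Function.Injective (Fmap k n h) := by
  rintro ⟨π, hπ⟩ ⟨π', hπ'⟩ hEq
  have hp : Fparts k π.parts = Fparts k π'.parts := congrArg (fun x => x.1.parts) hEq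
  have key := map_range_inj (Fparts_mono k π.parts) (Fparts_mono k π'.parts) hp
  have hN : ∀ t, 1 ≤ t → t ≤ k → N π.parts t = N π'.parts t := by
    intro t h1 h2
    have h3 := key (k - t) (by omega)
    have e : k - (k - t) = t := by omega
    rw [e] at h3
    omega
  have hc : ∀ v, π.parts.count v = π'.parts.count v := by
    intro v
    rcases Nat.eq_zero_or_pos v with rfl | hv
    · rw [Multiset.count_eq_zero_of_notMem (fun hm => lt_irrefl 0 (π.parts_pos hm)),
        Multiset.count_eq_zero_of_notMem (fun hm => lt_irrefl 0 (π'.parts_pos hm))]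
    rcases le_or_gt v k with hvk | hvk
    · have e1 := N_succ_add_count π.parts v
      have e2 := N_succ_add_count π'.parts v
      have h1 : N π.parts v = N π'.parts v := hN v hv hvk
      have h2 : N π.parts (v + 1) = N π'.parts (v + 1) := by
        rcases le_or_gt (v + 1) k with h3 | h3
        · exact hN (v + 1) (by omega) h3
        · rw [N_large hπ h3, N_large hπ' h3]
      omega
    · rw [Multiset.count_eq_zero_of_notMem (fun hm => absurd (hπ v hm) (by omega)),
        Multiset.count_eq_zero_of_notMem (fun hm => absurd (hπ' v hm) (by omega))]
  apply Subtype.ext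
  apply Nat.Partition.ext
  exact Multiset.ext.2 hc

lemma Fmap_surj (h : (k + 1).choose 2 ≤ n) : Function.Surjective (Fmap k n h) := by
  rintro ⟨σ, hcard, hnodup⟩
  set l : List ℕ := σ.parts.sort (· ≤ ·) with hl
  have hcoe : (↑l : Multiset ℕ) = σ.parts := Multiset.sort_eq _ _
  have hlen : l.length = k := by rw [hl, Multiset.length_sort, hcard]
  have hnd : l.Nodup := by rw [← Multiset.coe_nodup, hcoe]; exact hnodup
  have hsort : l.Pairwise (· < ·) :=
    (Multiset.pairwise_sort _ _).imp₂ (fun a b h1 h2 => lt_of_le_of_ne h1 h2) hnd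
  have hmeml : ∀ x ∈ l, 0 < x := by
    intro x hx
    exact σ.parts_pos (by rw [← hcoe]; exact hx)
  have hsuml : l.sum = n := by
    have := σ.parts_sum
    rw [← hcoe, Multiset.sum_coe] at this
    exact this
  set a : ℕ → ℕ := fun j => l.getD j 0 with haa
  have hstep : ∀ j, j + 1 < k → a j < a (j + 1) := by
    intro j hj
    have h1 : j < l.length := by omega
    have h2 : j + 1 < l.length := by omega
    have := List.pairwise_iff_get.1 hsort _ _ (show (⟨j, h1⟩ : Fin l.length) < ⟨j + 1, h2⟩ by
      simp [Fin.lt_def])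
    show l.getD j 0 < l.getD (j + 1) 0
    rw [List.getD_eq_getElem l 0 h1, List.getD_eq_getElem l 0 h2]
    simpa [List.get_eq_getElem] using this
  set d : ℕ → ℕ := fun j => if j = 0 then a 0 - 1 else a j - a (j - 1) - 1 with hd
  set D : ℕ → ℕ := fun j => ∑ i ∈ Finset.range (j + 1), d i with hD
  have key : ∀ j, j < k → a j = j + 1 + D j := by
    intro j
    induction j with
    | zero =>
      intro h0
      have hpos : 0 < a 0 := by
        apply hmeml
        have h1 : 0 < l.length := by omega
        rw [haa]
        simp only [List.getD_eq_getElem _ _ h1]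
        exact List.getElem_mem h1
      have hD0 : D 0 = d 0 := Finset.sum_range_one d
      have hd0 : d 0 = a 0 - 1 := if_pos rfl
      omega
    | succ j ih =>
      intro hjk
      have h1 := ih (by omega)
      have h2 := hstep j hjk
      have h3 : D (j + 1) = D j + d (j + 1) := by
        rw [hD]; exact Finset.sum_range_succ d (j + 1)
      have h4 : d (j + 1) = a (j + 1) - a j - 1 := by
        rw [hd]; simp
      omega
  -- the candidate partition
  set P : Multiset ℕ := (Multiset.range k).bind (fun j => Multiset.replicate (d j) (k - j))
    with hP
  have hPmem : ∀ i ∈ P, 0 < i ∧ i ≤ k := by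
    intro i hi
    rw [hP, Multiset.mem_bind] at hi
    obtain ⟨j, hj, hi⟩ := hi
    rw [Multiset.mem_range] at hj
    rw [Multiset.eq_of_mem_replicate hi]
    omega
  have hsuma : (∑ j ∈ Finset.range k, a j) = n := by
    have hlist : (List.range k).map a = l := by
      apply List.ext_getElem
      · simp [hlen]
      · intro i h1 h2
        have h3 : i < k := by simpa using h1
        have h4 : i < l.length := by omega
        rw [List.getElem_map, List.getElem_range]
        exact List.getD_eq_getElem l 0 h4
    have : ((Multiset.range k).map a).sum = (↑((List.range k).map a) : Multiset ℕ).sum := rfl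
    calc (∑ j ∈ Finset.range k, a j) = ((List.range k).map a).sum := by
          rw [← Multiset.sum_coe]; rfl
      _ = l.sum := by rw [hlist]
      _ = n := hsuml
  have hDsum : (∑ j ∈ Finset.range k, D j) = ∑ i ∈ Finset.range k, (k - i) * d i := by
    have h1 : ∀ j ∈ Finset.range k, D j = ∑ i ∈ Finset.range k, if i ≤ j then d i else 0 := by
      intro j hj
      rw [Finset.mem_range] at hj
      show (∑ i ∈ Finset.range (j + 1), d i) = _
      exact (sum_ite_le d hj).symm
    rw [Finset.sum_congr rfl h1, Finset.sum_comm]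
    refine Finset.sum_congr rfl ?_
    intro i hi
    rw [Finset.mem_range] at hi
    have h2 : (∑ j ∈ Finset.range k, if i ≤ j then d i else 0)
        = ∑ j ∈ (Finset.range k).filter (fun j => i ≤ j), d i := by
      rw [Finset.sum_filter]
    rw [h2, Finset.sum_const, card_filter_le, smul_eq_mul]
  have hPsum : P.sum = n - (k + 1).choose 2 := by
    have h1 : P.sum = ∑ j ∈ Finset.range k, (k - j) * d j := by
      rw [hP, Multiset.sum_bind]
      have : ((Multiset.range k).map (fun j => (Multiset.replicate (d j) (k - j)).sum)).sum
          = ∑ j ∈ Finset.range k, (Multiset.replicate (d j) (k - j)).sum := rfl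
      rw [this]
      refine Finset.sum_congr rfl ?_
      intro j hj
      rw [Multiset.sum_replicate, smul_eq_mul]
      exact Nat.mul_comm _ _
    have h2 : (∑ j ∈ Finset.range k, (j + 1)) = (k + 1).choose 2 := by
      have h3 := Finset.sum_range_succ' (fun i => i) k
      have h4 : (∑ i ∈ Finset.range (k + 1), i) = (k + 1).choose 2 := by
        rw [Finset.sum_range_id, Nat.choose_two_right]
      omega
    have h5 : (∑ j ∈ Finset.range k, a j)
        = (∑ j ∈ Finset.range k, (j + 1)) + ∑ j ∈ Finset.range k, D j := by
      rw [← Finset.sum_add_distrib]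
      refine Finset.sum_congr rfl ?_
      intro j hj
      rw [Finset.mem_range] at hj
      exact key j hj
    rw [h1, ← hDsum]
    omega
  refine ⟨⟨⟨P, fun hi => (hPmem _ hi).1, hPsum⟩, fun i hi => (hPmem i hi).2⟩, ?_⟩
  apply Subtype.ext
  apply Nat.Partition.ext
  show Fparts k P = σ.parts
  have hNP : ∀ j0, j0 < k → N P (k - j0) = D j0 := by
    intro j0 hj0
    rw [N, hP, countP_bind]
    have h1 : ((Multiset.range k).map
          (fun j => (Multiset.replicate (d j) (k - j)).countP (fun p => k - j0 ≤ p))).sum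
        = ∑ j ∈ Finset.range k, (Multiset.replicate (d j) (k - j)).countP (fun p => k - j0 ≤ p)
        := rfl
    rw [h1]
    have h2 : ∀ j ∈ Finset.range k,
        (Multiset.replicate (d j) (k - j)).countP (fun p => k - j0 ≤ p)
          = if j ≤ j0 then d j else 0 := by
      intro j hj
      rw [Finset.mem_range] at hj
      rw [countP_replicate]
      have : (k - j0 ≤ k - j) ↔ j ≤ j0 := by omega
      simp only [this]
    rw [Finset.sum_congr rfl h2, sum_ite_le d hj0, hD]
  have hmap : Fparts k P = (Multiset.range k).map a := by
    rw [Fparts]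
    refine Multiset.map_congr rfl ?_
    intro j hj
    rw [Multiset.mem_range] at hj
    rw [hNP j hj, ← key j hj]
  rw [hmap]
  have hlist : (List.range k).map a = l := by
    apply List.ext_getElem
    · simp [hlen]
    · intro i h1 h2
      have h3 : i < k := by simpa using h1
      have h4 : i < l.length := by omega
      rw [List.getElem_map, List.getElem_range]
      exact List.getD_eq_getElem l 0 h4
  calc (Multiset.range k).map a = (↑((List.range k).map a) : Multiset ℕ) := rfl
    _ = (↑l : Multiset ℕ) := by rw [hlist]
    _ = σ.parts := hcoe

end DKAux

/-- `p_k(n)`: the number of partitions of `n` with no part greater than `k`. -/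
def numPartitionsMaxPart (k n : ℕ) : ℕ :=
  Fintype.card {π : Nat.Partition n // ∀ i ∈ π.parts, i ≤ k}

theorem distinct_k_parts_eq_max_part_shifted (k n : ℕ) (h : (k + 1).choose 2 ≤ n) :
    numDistinctPartitionsWithKParts k n = numPartitionsMaxPart k (n - (k + 1).choose 2) := by
  exact (Fintype.card_of_bijective ⟨DKAux.Fmap_inj h, DKAux.Fmap_surj h⟩).symm
end

section
/- Let k, n ≥ 0 be integers with k ≥ n, let m ∈ [0,n], let a_1 ≤ ⋯ ≤ a_r be a partition of m and b_1 ≤ ⋯ ≤ b_s a partition of n − m (all parts positive). Define c_j = j for 1 ≤ j ≤ k − s and c_j = j + b_{j−(k−s)} for k − s + 1 ≤ j ≤ k. Then r + s ≤ k, c_1 < c_2 < ⋯ < c_k, each a_i belongs to {c_1, …, c_{k−s}}, and a_1 + ⋯ + a_r + c_1 + ⋯ + c_k = n + C(k+1,2); in particular the multiset {a_1, …, a_r, c_1, …, c_k} is a partition of n + C(k+1,2) having exactly k different values for the parts. -/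
lemma gauss_icc (k : ℕ) : ∑ j ∈ Finset.Icc 1 k, j = (k+1).choose 2 := by
  induction k with
  | zero => simp
  | succ k ih =>
    rw [Finset.sum_Icc_succ_top (by omega), ih,
      show k+1+1 = (k+1)+1 from rfl, Nat.choose_succ_succ (k+1) 1, Nat.choose_one_right,
      show Nat.succ 1 = 2 from rfl]
    omega

theorem combinatorial_construction (k n m r s : ℕ) (hkn : n ≤ k) (hmn : m ≤ n)
    (a b c : ℕ → ℕ)
    -- `a 1 ≤ ⋯ ≤ a r` is a partition of `m` (parts positive, non-decreasing)
    (ha_pos : ∀ i, 1 ≤ i → i ≤ r → 0 < a i)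
    (ha_mono : ∀ i j, 1 ≤ i → i ≤ j → j ≤ r → a i ≤ a j)
    (ha_sum : ∑ i ∈ Finset.Icc 1 r, a i = m)
    -- `b 1 ≤ ⋯ ≤ b s` is a partition of `n - m`
    (hb_pos : ∀ i, 1 ≤ i → i ≤ s → 0 < b i)
    (hb_mono : ∀ i j, 1 ≤ i → i ≤ j → j ≤ s → b i ≤ b j)
    (hb_sum : ∑ i ∈ Finset.Icc 1 s, b i = n - m)
    -- definition of `c`
    (hc1 : ∀ j, 1 ≤ j → j ≤ k - s → c j = j)
    (hc2 : ∀ j, k - s + 1 ≤ j → j ≤ k → c j = j + b (j - (k - s))) :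
    -- conclusions
    r + s ≤ k ∧
    (∀ i j, 1 ≤ i → i < j → j ≤ k → c i < c j) ∧
    (∀ i, 1 ≤ i → i ≤ r → ∃ j, 1 ≤ j ∧ j ≤ k - s ∧ c j = a i) ∧
    ((∑ i ∈ Finset.Icc 1 r, a i) + ∑ j ∈ Finset.Icc 1 k, c j = n + (k + 1).choose 2) ∧
    ∃ π : Nat.Partition (n + (k + 1).choose 2),
      π.parts = (Multiset.Icc 1 r).map a + (Multiset.Icc 1 k).map c ∧
      π.parts.toFinset.card = k := by
  have hr : r ≤ m := by
    calc r = ∑ _i ∈ Finset.Icc 1 r, 1 := by simp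
    _ ≤ ∑ i ∈ Finset.Icc 1 r, a i := Finset.sum_le_sum (fun i hi => by
        rw [Finset.mem_Icc] at hi; exact ha_pos i hi.1 hi.2)
    _ = m := ha_sum
  have hs : s ≤ n - m := by
    calc s = ∑ _i ∈ Finset.Icc 1 s, 1 := by simp
    _ ≤ ∑ i ∈ Finset.Icc 1 s, b i := Finset.sum_le_sum (fun i hi => by
        rw [Finset.mem_Icc] at hi; exact hb_pos i hi.1 hi.2)
    _ = n - m := hb_sum
  have hrs : r + s ≤ k := by omega
  have hmono : ∀ i j, 1 ≤ i → i < j → j ≤ k → c i < c j := by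
    intro i j hi hij hj
    rcases le_or_gt j (k - s) with hjks | hjks
    · rw [hc1 i hi (by omega), hc1 j (by omega) hjks]; exact hij
    · rcases le_or_gt i (k - s) with hiks | hiks
      · rw [hc1 i hi hiks, hc2 j (by omega) hj]; omega
      · rw [hc2 i (by omega) (by omega), hc2 j (by omega) hj]
        have := hb_mono (i - (k-s)) (j - (k-s)) (by omega) (by omega) (by omega)
        omega
  have hain : ∀ i, 1 ≤ i → i ≤ r → ∃ j, 1 ≤ j ∧ j ≤ k - s ∧ c j = a i := by
    intro i hi hir
    have hai : a i ≤ m := ha_sum ▸ Finset.single_le_sum (f := a)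
      (fun _ _ => Nat.zero_le _) (Finset.mem_Icc.mpr ⟨hi, hir⟩)
    have h1 : 1 ≤ a i := ha_pos i hi hir
    exact ⟨a i, h1, by omega, hc1 _ h1 (by omega)⟩
  have hcsum : ∑ j ∈ Finset.Icc 1 k, c j = (n - m) + (k+1).choose 2 := by
    have hsplit : Finset.Icc 1 k = Finset.Icc 1 (k-s) ∪ Finset.Icc (k-s+1) k := by
      ext x; simp only [Finset.mem_Icc, Finset.mem_union]; omega
    have hdisj : Disjoint (Finset.Icc 1 (k-s)) (Finset.Icc (k-s+1) k) := by
      rw [Finset.disjoint_left]; intro x hx hx'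
      simp only [Finset.mem_Icc] at hx hx'; omega
    have h1 : ∑ j ∈ Finset.Icc 1 (k-s), c j = ∑ j ∈ Finset.Icc 1 (k-s), j :=
      Finset.sum_congr rfl (fun j hj => by rw [Finset.mem_Icc] at hj; exact hc1 j hj.1 hj.2)
    have hre : ∑ j ∈ Finset.Icc (k-s+1) k, b (j - (k-s)) = ∑ i ∈ Finset.Icc 1 s, b i := by
      apply Finset.sum_nbij' (fun j => j - (k-s)) (fun i => i + (k-s)) <;>
        intro x hx <;> simp only [Finset.mem_Icc] at * <;> omega
    have h2 : ∑ j ∈ Finset.Icc (k-s+1) k, c j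
        = (∑ j ∈ Finset.Icc (k-s+1) k, j) + (n - m) := by
      rw [← hb_sum, ← hre, ← Finset.sum_add_distrib]
      exact Finset.sum_congr rfl (fun j hj => by
        rw [Finset.mem_Icc] at hj; exact hc2 j hj.1 hj.2)
    rw [hsplit, Finset.sum_union hdisj, h1, h2, ← add_assoc, ← Finset.sum_union hdisj,
      ← hsplit, gauss_icc]
    omega
  refine ⟨hrs, hmono, hain, by rw [ha_sum, hcsum]; omega, ?_⟩
  refine ⟨⟨(Multiset.Icc 1 r).map a + (Multiset.Icc 1 k).map c, ?_, ?_⟩, rfl, ?_⟩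
  · intro x hx
    rw [Multiset.mem_add] at hx
    rcases hx with hx | hx <;> rw [Multiset.mem_map] at hx <;>
      obtain ⟨j, hj, rfl⟩ := hx <;> rw [Multiset.mem_Icc] at hj
    · exact ha_pos j hj.1 hj.2
    · rcases le_or_gt j (k-s) with h | h
      · rw [hc1 j hj.1 h]; omega
      · rw [hc2 j (by omega) hj.2]; omega
  · rw [Multiset.sum_add]
    have e1 : ((Multiset.Icc 1 r).map a).sum = ∑ i ∈ Finset.Icc 1 r, a i := rfl
    have e2 : ((Multiset.Icc 1 k).map c).sum = ∑ j ∈ Finset.Icc 1 k, c j := rfl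
    rw [e1, e2, ha_sum, hcsum]; omega
  · have hinj : Set.InjOn c (Finset.Icc 1 k) := by
      intro i hi j hj heq
      simp only [Finset.coe_Icc, Set.mem_Icc] at hi hj
      rcases lt_trichotomy i j with h | h | h
      · exact absurd heq (hmono i j hi.1 h hj.2).ne
      · exact h
      · exact absurd heq.symm (hmono j i hj.1 h hi.2).ne
    have ht : ((Multiset.Icc 1 r).map a + (Multiset.Icc 1 k).map c).toFinset
        = Finset.image c (Finset.Icc 1 k) := by
      have hv1 : (Multiset.Icc 1 r).toFinset = Finset.Icc 1 r := Finset.val_toFinset _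
      have hv2 : (Multiset.Icc 1 k).toFinset = Finset.Icc 1 k := Finset.val_toFinset _
      rw [Multiset.toFinset_add, Multiset.toFinset_map, Multiset.toFinset_map, hv1, hv2]
      apply Finset.union_eq_right.mpr
      intro x hx
      rw [Finset.mem_image] at hx ⊢
      obtain ⟨i, hi, rfl⟩ := hx
      rw [Finset.mem_Icc] at hi
      obtain ⟨j, hj1, hj2, hj3⟩ := hain i hi.1 hi.2
      exact ⟨j, Finset.mem_Icc.mpr ⟨hj1, by omega⟩, hj3⟩
    simp only [ht]
    rw [Finset.card_image_of_injOn hinj, Nat.card_Icc]; omega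
end
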